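/- arXiv:1607.04499 — 9 statements merged into one kernel-verified Lean document; each statement's English description precedes it below -/
import Mathlib

section
/- Let F be a field, let n and k be positive integers, and let K = 2k+1. For 1 ≤ i ≤ K let α_{K,i} ∈ F^n be the vector whose j-th entry (1 ≤ j ≤ n) is 1 if j ≡ i (mod K) and 0 otherwise. If A and B are n×n matrices over F that are both band matrices with band width k, and A·α_{K,i} = B·α_{K,i} for every i with 1 ≤ i ≤ K, then A = B. -/
lemma comb_mulVec_eq {F : Type*} [Field F] {n k : ℕ}
    (A : Matrix (Fin n) (Fin n) F)
    (hA : ∀ i j : Fin n, (k : ℤ) < |(i : ℤ) - (j : ℤ)| → A i j = 0)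
    (i j : Fin n) (hij : |(i : ℤ) - (j : ℤ)| ≤ k) :
    A.mulVec (fun c : Fin n =>
        if ((c : ℕ) + 1) % (2 * k + 1) = ((j : ℕ) + 1) % (2 * k + 1) then (1 : F) else 0) i
      = A i j := by
  unfold Matrix.mulVec dotProduct
  rw [Finset.sum_eq_single j]
  · simp
  · intro c _ hc
    by_cases hr : ((c : ℕ) + 1) % (2 * k + 1) = ((j : ℕ) + 1) % (2 * k + 1)
    · -- same residue class, but c ≠ j, so |c - j| ≥ 2k+1, hence |i - c| > k
      have hdvd : ((2 * k + 1 : ℕ) : ℤ) ∣ ((c : ℤ) - (j : ℤ)) := by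
        have hmod : ((c : ℕ) + 1) ≡ ((j : ℕ) + 1) [MOD 2 * k + 1] := hr
        have h2 : ((c : ℕ) + 1 : ℤ) ≡ ((j : ℕ) + 1 : ℤ) [ZMOD (2 * k + 1 : ℕ)] := by
          exact_mod_cast Int.natCast_modEq_iff.mpr hmod
        have h3 : ((c : ℕ) : ℤ) ≡ ((j : ℕ) : ℤ) [ZMOD (2 * k + 1 : ℕ)] :=
          Int.ModEq.add_right_cancel' 1 (by simpa [add_comm] using h2)
        exact (Int.modEq_iff_dvd.mp h3.symm)
      have hne : (c : ℤ) - (j : ℤ) ≠ 0 := by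
        intro h0
        exact hc (Fin.ext (by omega))
      have hge : (2 * k + 1 : ℤ) ≤ |(c : ℤ) - (j : ℤ)| := by
        have := Int.le_of_dvd (abs_pos.mpr hne) ((dvd_abs _ _).mpr hdvd)
        simpa using this
      have : (k : ℤ) < |(i : ℤ) - (c : ℤ)| := by
        have := abs_sub_abs_le_abs_sub ((c : ℤ) - (j : ℤ)) ((i : ℤ) - (j : ℤ))
        rw [show (c : ℤ) - j - ((i : ℤ) - j) = (c : ℤ) - i by ring] at this
        rw [abs_sub_comm (i : ℤ) c]
        omega
      simp [hA i c this]
    · simp [hr]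
  · intro hj; exact absurd (Finset.mem_univ j) hj

/-- If two band matrices of band width `k` agree on the `2k+1`
"comb" test vectors `α_{K,i}`, then they are equal. -/
theorem band_matrix_determined_by_comb_vectors
    {F : Type*} [Field F] (n k : ℕ) (hn : 0 < n) (hk : 0 < k)
    (A B : Matrix (Fin n) (Fin n) F)
    (hA : ∀ i j : Fin n, (k : ℤ) < |(i : ℤ) - (j : ℤ)| → A i j = 0)
    (hB : ∀ i j : Fin n, (k : ℤ) < |(i : ℤ) - (j : ℤ)| → B i j = 0)
    (h : ∀ i : ℕ, 1 ≤ i → i ≤ 2 * k + 1 →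
      A.mulVec (fun j : Fin n =>
          if ((j : ℕ) + 1) % (2 * k + 1) = i % (2 * k + 1) then (1 : F) else 0) =
      B.mulVec (fun j : Fin n =>
          if ((j : ℕ) + 1) % (2 * k + 1) = i % (2 * k + 1) then (1 : F) else 0)) :
    A = B := by
  ext i j
  by_cases hij : (k : ℤ) < |(i : ℤ) - (j : ℤ)|
  · rw [hA i j hij, hB i j hij]
  push_neg at hij
  set K := 2 * k + 1 with hK
  set r := ((j : ℕ) + 1) % K with hr
  have hrK : r < K := Nat.mod_lt _ (by omega)
  set i0 : ℕ := if r = 0 then K else r with hi0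
  have h1 : 1 ≤ i0 := by by_cases h0 : r = 0 <;> simp [hi0, h0] <;> omega
  have h2 : i0 ≤ K := by by_cases h0 : r = 0 <;> simp [hi0, h0] <;> omega
  have h3 : i0 % K = r := by
    by_cases h0 : r = 0 <;> simp [hi0, h0, Nat.mod_self, Nat.mod_eq_of_lt hrK]
  have := congrFun (h i0 h1 h2) i
  rw [h3] at this
  rw [comb_mulVec_eq A hA i j hij, comb_mulVec_eq B hB i j hij] at this
  exact this
end

section
/- Let F be a field, let S be a nonempty finite subset of F, let n be a positive integer, and let A, B ∈ M_n(F) with A ≠ B. Then the number of vectors x ∈ S^n (i.e., vectors in F^n all of whose entries lie in S) satisfying A·x = B·x is at most |S|^(n−1). In particular, if the entries of x are chosen uniformly and independently from S, then A·x = B·x with probability at most 1/|S|. -/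
/-- If `A ≠ B`, then the number of vectors `x` with all entries in a
nonempty finite set `S` satisfying `A·x = B·x` is at most `|S|^(n-1)`. -/
theorem frievalds_test_count
    {F : Type*} [Field F] (S : Finset F) (hS : S.Nonempty) (n : ℕ) (hn : 0 < n)
    (A B : Matrix (Fin n) (Fin n) F) (hAB : A ≠ B) :
    Nat.card {x : Fin n → F // (∀ j, x j ∈ S) ∧ A.mulVec x = B.mulVec x} ≤
      S.card ^ (n - 1) := by
  set C := A - B with hC
  obtain ⟨i, j, hij⟩ : ∃ i j, C i j ≠ 0 := by
    by_contra h
    push_neg at h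
    apply hAB
    ext i j
    have := h i j
    simpa [hC, sub_eq_zero] using this
  have key : ∀ x : Fin n → F, A.mulVec x = B.mulVec x →
      x j = -(∑ k ∈ Finset.univ.erase j, C i k * x k) / C i j := by
    intro x hx
    have h0 : ∑ k, C i k * x k = 0 := by
      have h1 : C.mulVec x i = 0 := by
        rw [hC, Matrix.sub_mulVec, hx]; simp
      simpa [Matrix.mulVec, dotProduct] using h1
    have h2 : C i j * x j + ∑ k ∈ Finset.univ.erase j, C i k * x k = 0 := by
      rw [Finset.add_sum_erase Finset.univ (fun k => C i k * x k) (Finset.mem_univ j)]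
      exact h0
    rw [eq_div_iff hij]
    linear_combination h2
  have hinj : Function.Injective
      (fun x : {x : Fin n → F // (∀ j, x j ∈ S) ∧ A.mulVec x = B.mulVec x} =>
        (fun k : {k : Fin n // k ≠ j} => (⟨x.1 k.1, x.2.1 k.1⟩ : S))) := by
    rintro ⟨x, hxS, hx⟩ ⟨y, hyS, hy⟩ h
    have hagree : ∀ k : Fin n, k ≠ j → x k = y k := by
      intro k hk
      have := congrFun h ⟨k, hk⟩
      exact Subtype.ext_iff.mp this
    ext k
    show x k = y k
    by_cases hk : k = j
    · subst hk
      rw [key x hx, key y hy]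
      congr 1
      congr 1
      apply Finset.sum_congr rfl
      intro m hm
      rw [hagree m (Finset.ne_of_mem_erase hm)]
    · exact hagree k hk
  calc Nat.card {x : Fin n → F // (∀ j, x j ∈ S) ∧ A.mulVec x = B.mulVec x}
      ≤ Nat.card ({k : Fin n // k ≠ j} → S) := Nat.card_le_card_of_injective _ hinj
    _ = S.card ^ (n - 1) := by
        rw [Nat.card_eq_fintype_card, Fintype.card_fun]
        congr 1
        · simp
        · simp [Fintype.card_subtype_compl]
end

section
/- Let F be a finite field with q elements, let n and ℓ be positive integers, let A ∈ M_n(F) be invertible, let v ∈ F^n be a column vector, and let R ∈ F^(ℓ×n). Then either (i) the matrix A + v·u·R is invertible for every row vector u ∈ F^ℓ, or (ii) the number of row vectors u ∈ F^ℓ such that A + v·u·R is invertible is exactly (1 − q^(−1)) · q^ℓ. -/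
open Matrix

/-- determinant criterion: `A + v ⬝ wᵀ` is a unit iff `1 + w ⬝ᵥ A⁻¹ v ≠ 0`. -/
lemma isUnit_add_vecMulVec_iff {F : Type*} [Field F] {n : ℕ}
    (A : Matrix (Fin n) (Fin n) F) (hA : IsUnit A) (v w : Fin n → F) :
    IsUnit (A + Matrix.vecMulVec v w) ↔ 1 + w ⬝ᵥ (A⁻¹ *ᵥ v) ≠ 0 := by
  have hdet : IsUnit A.det := (Matrix.isUnit_iff_isUnit_det A).mp hA
  have h1 : A + Matrix.vecMulVec v w
      = A * (1 + (A⁻¹ * Matrix.replicateCol (Fin 1) v) * Matrix.replicateRow (Fin 1) w) := by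
    rw [Matrix.mul_add, Matrix.mul_one, ← Matrix.mul_assoc,
      Matrix.mul_nonsing_inv_cancel_left A _ hdet, Matrix.vecMulVec_eq (Fin 1) v w]
    rfl
  have h2 : (1 + Matrix.replicateRow (Fin 1) w * (A⁻¹ * Matrix.replicateCol (Fin 1) v)).det
      = 1 + w ⬝ᵥ (A⁻¹ *ᵥ v) := by
    rw [Matrix.det_fin_one]
    simp [Matrix.mul_apply, Matrix.replicateRow, Matrix.replicateCol, dotProduct, Matrix.mulVec,
      Finset.mul_sum, mul_comm, mul_assoc]
  rw [Matrix.isUnit_iff_isUnit_det, h1, Matrix.det_mul,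
    Matrix.det_one_add_mul_comm, h2, isUnit_iff_ne_zero, mul_ne_zero_iff]
  have : A.det ≠ 0 := hdet.ne_zero
  tauto

/-- for an invertible matrix `A`, a column vector `v` and a matrix
`R ∈ F^(ℓ×n)`, either `A + v·u·R` is invertible for every row vector `u ∈ F^ℓ`,
or the number of row vectors `u` making it invertible is exactly
`(1 - q⁻¹) q^ℓ = (q-1) q^(ℓ-1)`. -/
theorem rank_one_update_nonsingular_dichotomy
    {F : Type*} [Field F] [Fintype F] (n ℓ q : ℕ) (hn : 0 < n) (hℓ : 0 < ℓ)
    (hq : q = Fintype.card F)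
    (A : Matrix (Fin n) (Fin n) F) (hA : IsUnit A)
    (v : Fin n → F) (R : Matrix (Fin ℓ) (Fin n) F) :
    (∀ u : Fin ℓ → F, IsUnit (A + Matrix.vecMulVec v (Matrix.vecMul u R))) ∨
    Nat.card {u : Fin ℓ → F //
        IsUnit (A + Matrix.vecMulVec v (Matrix.vecMul u R))} =
      (q - 1) * q ^ (ℓ - 1) := by
  classical
  set c : Fin ℓ → F := R *ᵥ (A⁻¹ *ᵥ v) with hc
  have key : ∀ u : Fin ℓ → F,
      IsUnit (A + Matrix.vecMulVec v (Matrix.vecMul u R)) ↔ u ⬝ᵥ c ≠ -1 := by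
    intro u
    have hx : (u ᵥ* R) ⬝ᵥ (A⁻¹ *ᵥ v) = u ⬝ᵥ c := (Matrix.dotProduct_mulVec u R _).symm
    rw [isUnit_add_vecMulVec_iff A hA v _, hx]
    constructor
    · intro h h'; apply h; rw [h']; ring
    · intro h h'; apply h; linear_combination h'
  by_cases hc0 : c = 0
  · left
    intro u
    rw [key u, hc0]
    simp
  · right
    -- linear functional u ↦ u ⬝ᵥ c is surjective
    let f : (Fin ℓ → F) →ₗ[F] F :=
      { toFun := fun u => u ⬝ᵥ c
        map_add' := fun x y => add_dotProduct x y c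
        map_smul' := fun r x => smul_dotProduct r x c }
    have hsurj : Function.Surjective f := by
      obtain ⟨i, hi⟩ := Function.ne_iff.mp hc0
      intro a
      have hi' : c i ≠ 0 := by simpa using hi
      refine ⟨Pi.single i (a / c i), ?_⟩
      simp only [f, LinearMap.coe_mk, AddHom.coe_mk, dotProduct]
      rw [Finset.sum_eq_single i]
      · rw [Pi.single_eq_same, div_mul_cancel₀ _ hi']
      · intro b _ hb; simp [Pi.single_eq_of_ne hb]
      · simp
    -- cardinality of the kernel
    have hrank : Module.finrank F (LinearMap.ker f) = ℓ - 1 := by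
      have := LinearMap.finrank_range_add_finrank_ker f
      have hr : Module.finrank F (LinearMap.range f) = 1 := by
        rw [LinearMap.range_eq_top.mpr hsurj, finrank_top, Module.finrank_self]
      rw [hr] at this
      simp only [Module.finrank_pi, Fintype.card_fin] at this
      omega
    have hker : Fintype.card (LinearMap.ker f) = q ^ (ℓ - 1) := by
      rw [Module.card_eq_pow_finrank (K := F) (V := LinearMap.ker f), hrank, hq]
    -- fiber over -1 has same card as kernel
    obtain ⟨u₀, hu₀⟩ := hsurj (-1)
    have hfib : Fintype.card {u : Fin ℓ → F // f u = -1} = q ^ (ℓ - 1) := by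
      rw [← hker]
      apply Fintype.card_congr
      refine ⟨fun x => ⟨x.1 - u₀, ?_⟩, fun x => ⟨x.1 + u₀, ?_⟩, ?_, ?_⟩
      · have := x.2; simp [LinearMap.mem_ker, map_sub, this, hu₀]
      · have := x.2; rw [LinearMap.mem_ker] at this; simp [map_add, this, hu₀]
      · intro x; ext; simp
      · intro x; ext; simp
    have hcard : Nat.card {u : Fin ℓ → F // u ⬝ᵥ c ≠ -1} = (q - 1) * q ^ (ℓ - 1) := by
      rw [Nat.card_eq_fintype_card]
      have : Fintype.card {u : Fin ℓ → F // ¬ (f u = -1)} =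
          Fintype.card (Fin ℓ → F) - Fintype.card {u : Fin ℓ → F // f u = -1} :=
        Fintype.card_subtype_compl _
      have hall : Fintype.card (Fin ℓ → F) = q ^ ℓ := by
        rw [Fintype.card_pi, hq]; simp
      have heq : Fintype.card {u : Fin ℓ → F // u ⬝ᵥ c ≠ -1} =
          Fintype.card {u : Fin ℓ → F // ¬ (f u = -1)} := rfl
      rw [heq, this, hall, hfib]
      have hqpos : 0 < q := by rw [hq]; exact Fintype.card_pos
      have : q ^ ℓ = q * q ^ (ℓ - 1) := by
        conv_lhs => rw [show ℓ = 1 + (ℓ - 1) by omega]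
        rw [pow_add, pow_one]
      rw [this, Nat.sub_mul, one_mul]
    rw [← hcard]
    exact Nat.card_congr (Equiv.subtypeEquivRight fun u => key u)
end

section
/- Let F be a finite field with q elements, let n, k, ℓ be positive integers, let A ∈ M_n(F) be invertible, let V ∈ F^(n×k), and let R ∈ F^(ℓ×n). Then the number of matrices U ∈ F^(k×ℓ) such that A + V·U·R is invertible is at least (1 − q^(−1)) · q^(kℓ) if k = 1, and at least (1 − (q+1)/q²) · q^(kℓ) if k ≥ 2. -/
open Finset Matrix

/-- Fiber-counting for a surjective additive hom between finite groups. -/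
lemma aux_card_comp {M N : Type*} [AddCommGroup M] [AddCommGroup N] [Fintype M] [Fintype N]
    (f : M →+ N) (hf : Function.Surjective f) (P : N → Prop) :
    ∃ c : ℕ, Nat.card {x : M // P (f x)} = c * Nat.card {y : N // P y} ∧
      Fintype.card M = c * Fintype.card N := by
  classical
  set c := Nat.card {x : M // f x = 0} with hcdef
  have hfib : ∀ y : N, Nat.card {x : M // f x = y} = c := by
    intro y
    obtain ⟨x0, hx0⟩ := hf y
    refine Nat.card_congr ⟨fun z => ⟨z.1 - x0, by simp [map_sub, z.2, hx0]⟩,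
      fun z => ⟨z.1 + x0, by simp [map_add, z.2, hx0]⟩, fun z => by simp, fun z => by simp⟩
  refine ⟨c, ?_, ?_⟩
  · have e := (Equiv.sigmaSubtypeFiberEquivSubtype f (p := fun x => P (f x)) (q := P)
      (fun x => Iff.rfl)).symm
    rw [Nat.card_congr e, Nat.card_eq_fintype_card, Fintype.card_sigma]
    have h : ∀ y : {y : N // P y}, Fintype.card {x : M // f x = (y : N)} = c := by
      intro y
      rw [← Nat.card_eq_fintype_card]
      exact hfib y
    rw [Finset.sum_congr rfl (fun y _ => h y), Finset.sum_const, Finset.card_univ,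
      Nat.card_eq_fintype_card, smul_eq_mul, mul_comm]
  · rw [Fintype.card_congr (Equiv.sigmaFiberEquiv f).symm, Fintype.card_sigma]
    have h : ∀ y : N, Fintype.card {x : M // f x = y} = c := by
      intro y
      rw [← Nat.card_eq_fintype_card]
      exact hfib y
    rw [Finset.sum_congr rfl (fun y _ => h y), Finset.sum_const, Finset.card_univ,
      smul_eq_mul, mul_comm]

/-- Lower bound on the truncated Euler-type product. -/
lemma aux_prod_lb (q : ℚ) (hq : 2 ≤ q) (r : ℕ) :
    1 - (q + 1) / q ^ 2 ≤ ∏ i ∈ Finset.range r, (1 - (1 / q) ^ (i + 1)) := by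
  have hq0 : (0:ℚ) < q := by linarith
  rcases Nat.eq_zero_or_pos r with rfl | hr
  · simp only [Finset.range_zero, Finset.prod_empty]
    have : 0 ≤ (q + 1) / q ^ 2 := by positivity
    linarith
  · have main : ∀ s, 1 ≤ s →
        1 - (q + 1) / q ^ 2 + (1 / q) ^ (s + 1) ≤ ∏ i ∈ Finset.range s, (1 - (1 / q) ^ (i + 1)) := by
      intro s hs
      induction s, hs using Nat.le_induction with
      | base =>
        rw [Finset.prod_range_one]
        have : (q + 1) / q ^ 2 = 1 / q + (1/q) ^ 2 := by
          rw [div_eq_iff (by positivity : (q:ℚ)^2 ≠ 0)]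
          field_simp
        rw [this]
        ring_nf
        norm_num
      | succ n hn ih =>
        rw [Finset.prod_range_succ]
        set t : ℚ := 1 / q with ht
        have ht0 : 0 < t := by positivity
        have ht2 : t ≤ 1 / 2 := by
          rw [ht]
          rw [div_le_div_iff₀ hq0 (by norm_num)]
          linarith
        have ha : (q + 1) / q ^ 2 = t + t * t := by
          rw [ht, div_eq_iff (by positivity : (q:ℚ)^2 ≠ 0)]
          field_simp
        set s := t ^ (n + 1) with hsdef
        have hs0 : 0 ≤ s := by positivity
        have hst : s ≤ t * t := by
          rw [hsdef, show t * t = t ^ 2 by ring]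
          exact pow_le_pow_of_le_one (le_of_lt ht0) (by linarith) (by omega)
        have h1ms : 0 ≤ 1 - s := by nlinarith
        have hmul := mul_le_mul_of_nonneg_right ih h1ms
        have hpow : t ^ (n + 1 + 1) = s * t := by rw [hsdef, pow_succ]
        rw [ha, hpow] at *
        nlinarith [mul_nonneg hs0 (sub_nonneg.2 hst)]
    have h2 : (0:ℚ) ≤ (1/q) ^ (r+1) := by positivity
    linarith [main r hr]

lemma aux_prod_lb_one (q : ℚ) (hq : 2 ≤ q) (r : ℕ) (hr : r ≤ 1) :
    1 - 1 / q ≤ ∏ i ∈ Finset.range r, (1 - (1 / q) ^ (i + 1)) := by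
  have hq0 : (0:ℚ) < q := by linarith
  interval_cases r
  · simp only [Finset.range_zero, Finset.prod_empty]
    have : 0 ≤ 1 / q := by positivity
    linarith
  · rw [Finset.prod_range_one, pow_one]

/-- for invertible `A`, fixed `V ∈ F^(n×k)` and `R ∈ F^(ℓ×n)`, the
number of matrices `U ∈ F^(k×ℓ)` with `A + V·U·R` invertible is at least
`(1 - q⁻¹) q^(kℓ)` if `k = 1` and at least `(1 - (q+1)/q²) q^(kℓ)` if `k ≥ 2`. -/
theorem additive_preconditioner_nonsingular_count_sandwiched
    {F : Type*} [Field F] [Fintype F] (n k ℓ : ℕ) (hn : 0 < n) (hk : 0 < k) (hℓ : 0 < ℓ)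
    (q : ℚ) (hq : q = (Fintype.card F : ℚ))
    (A : Matrix (Fin n) (Fin n) F) (hA : IsUnit A)
    (V : Matrix (Fin n) (Fin k) F) (R : Matrix (Fin ℓ) (Fin n) F) :
    (k = 1 → (1 - 1 / q) * q ^ (k * ℓ) ≤
      (Nat.card {U : Matrix (Fin k) (Fin ℓ) F // IsUnit (A + V * U * R)} : ℚ)) ∧
    (2 ≤ k → (1 - (q + 1) / q ^ 2) * q ^ (k * ℓ) ≤
      (Nat.card {U : Matrix (Fin k) (Fin ℓ) F // IsUnit (A + V * U * R)} : ℚ)) := by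
  classical
  have hdetA : IsUnit A.det := (Matrix.isUnit_iff_isUnit_det A).mp hA
  have hAA : A * A⁻¹ = 1 := Matrix.mul_nonsing_inv A hdetA
  -- the sandwiched matrix
  set B : Matrix (Fin ℓ) (Fin k) F := R * (A⁻¹ * V) with hBdef
  set S : Submodule F (Fin k → F) := Submodule.span F (Set.range fun i => B i) with hSdef
  have hmem : ∀ i, B i ∈ S := fun i => Submodule.subset_span ⟨i, rfl⟩
  set r : ℕ := Module.finrank F S with hrdef
  have hrk : r ≤ k := by
    have h1 := Submodule.finrank_le S
    rwa [Module.finrank_fintype_fun_eq_card, Fintype.card_fin] at h1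
  let b : Module.Basis (Fin r) F S := Module.finBasis F S
  set D : Matrix (Fin r) (Fin k) F := Matrix.of (fun m j => (b m : Fin k → F) j) with hDdef
  set C : Matrix (Fin ℓ) (Fin r) F := Matrix.of (fun i m => b.repr ⟨B i, hmem i⟩ m) with hCdef
  -- full-rank factorization
  have hB : B = C * D := by
    ext i j
    have h2 := congrFun (congrArg Subtype.val (b.sum_repr ⟨B i, hmem i⟩)) j
    simp only [AddSubmonoidClass.coe_finset_sum, SetLike.val_smul, Finset.sum_apply,
      Pi.smul_apply, smul_eq_mul] at h2
    rw [Matrix.mul_apply]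
    simp only [hCdef, hDdef, Matrix.of_apply]
    exact h2.symm
  -- right inverse of D
  have hliD : LinearIndependent F (fun m => (b m : Fin k → F)) := by
    have h1 := b.linearIndependent
    exact h1.map' S.subtype S.ker_subtype
  have hinjD : Function.Injective D.vecMul := by
    rw [Matrix.vecMul_injective_iff]
    exact hliD
  have hkerD : LinearMap.ker D.vecMulLinear = ⊥ := by
    rw [LinearMap.ker_eq_bot, Matrix.coe_vecMulLinear]
    exact hinjD
  obtain ⟨g, hg⟩ := D.vecMulLinear.exists_leftInverse_of_injective hkerD
  set D' : Matrix (Fin k) (Fin r) F := LinearMap.toMatrixRight' g with hD'def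
  have hvD' : Matrix.vecMulLinear D' = g := LinearMap.toMatrixRight'.symm_apply_apply g
  have hDD' : D * D' = 1 := by
    ext m j
    have h1 : (D * D') m = D m ᵥ* D' := Matrix.mul_apply_eq_vecMul D D' m
    have h2 : D m ᵥ* D' = g (D m) := by rw [← Matrix.vecMulLinear_apply, hvD']
    have h3 : D m = Matrix.vecMulLinear D (Pi.single m 1) := by
      rw [Matrix.vecMulLinear_apply, Matrix.single_one_vecMul]
      rfl
    have h4 : (D * D') m = Pi.single m 1 := by
      rw [h1, h2, h3, ← LinearMap.comp_apply, hg, LinearMap.id_apply]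
    rw [congrFun h4 j, Matrix.one_apply, Pi.single_apply]
    simp [eq_comm]
  -- left inverse of C
  have hex : ∀ m : Fin r, ∃ e : Fin ℓ → F, ∑ i, e i • B i = (b m : Fin k → F) := by
    intro m
    exact (Submodule.mem_span_range_iff_exists_fun F).mp (b m).2
  choose e he using hex
  set C' : Matrix (Fin r) (Fin ℓ) F := Matrix.of e with hC'def
  have hC'C : C' * C = 1 := by
    ext m m'
    have hsum : (∑ i, e m i • (⟨B i, hmem i⟩ : S)) = b m := by
      apply Subtype.ext
      simp only [AddSubmonoidClass.coe_finset_sum, SetLike.val_smul]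
      exact he m
    set L : S →ₗ[F] F := (Finsupp.lapply m').comp b.repr.toLinearMap with hL
    have h2 : ∑ i, e m i * (b.repr ⟨B i, hmem i⟩) m' = (b.repr (b m)) m' := by
      have h := congrArg L hsum
      rw [map_sum] at h
      simp only [LinearMap.map_smul, smul_eq_mul] at h
      simpa [hL, LinearMap.coe_comp, Function.comp, Finsupp.lapply_apply,
        LinearEquiv.coe_coe] using h
    rw [Matrix.mul_apply]
    simp only [hC'def, hCdef, Matrix.of_apply]
    rw [h2, Module.Basis.repr_self, Finsupp.single_apply, Matrix.one_apply]
  -- the sandwich homomorphism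
  set ψ : Matrix (Fin k) (Fin ℓ) F →+ Matrix (Fin r) (Fin r) F :=
    AddMonoidHom.mk' (fun U => D * (U * C))
      (fun U U' => by simp only [Matrix.add_mul, Matrix.mul_add]) with hψdef
  have hψ : ∀ U, ψ U = D * (U * C) := fun U => rfl
  have hψsurj : Function.Surjective ψ := by
    intro Z
    refine ⟨D' * Z * C', ?_⟩
    rw [hψ]
    calc D * (D' * Z * C' * C) = D * (D' * Z * (C' * C)) := by rw [Matrix.mul_assoc (D' * Z)]
    _ = D * (D' * Z) := by rw [hC'C, Matrix.mul_one]
    _ = D * D' * Z := by rw [← Matrix.mul_assoc]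
    _ = Z := by rw [hDD', Matrix.one_mul]
  -- predicate equivalence
  have key : ∀ U : Matrix (Fin k) (Fin ℓ) F,
      IsUnit (A + V * U * R) ↔ IsUnit ((1 : Matrix (Fin r) (Fin r) F) + ψ U) := by
    intro U
    have h1 : A + V * U * R = A * (1 + A⁻¹ * V * (U * R)) := by
      rw [Matrix.mul_add, Matrix.mul_one, ← Matrix.mul_assoc A (A⁻¹ * V) (U * R),
        ← Matrix.mul_assoc A A⁻¹ V, hAA, Matrix.one_mul, Matrix.mul_assoc]
    have h2 : U * R * (A⁻¹ * V) = U * C * D := by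
      rw [Matrix.mul_assoc, ← hBdef, hB, ← Matrix.mul_assoc]
    rw [Matrix.isUnit_iff_isUnit_det, Matrix.isUnit_iff_isUnit_det, h1, Matrix.det_mul,
      Matrix.det_one_add_mul_comm, h2, Matrix.det_one_add_mul_comm, hψ]
    constructor
    · intro h
      exact isUnit_of_mul_isUnit_right h
    · intro h
      exact hdetA.mul h
  -- counting
  obtain ⟨c, hc1, hc2⟩ := aux_card_comp ψ hψsurj (fun Z => IsUnit (1 + Z))
  have hNcard : Nat.card {U : Matrix (Fin k) (Fin ℓ) F // IsUnit (A + V * U * R)} =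
      c * Nat.card {Z : Matrix (Fin r) (Fin r) F // IsUnit (1 + Z)} := by
    rw [← hc1]
    exact Nat.card_congr (Equiv.subtypeEquivRight key)
  have hZcard : Nat.card {Z : Matrix (Fin r) (Fin r) F // IsUnit (1 + Z)} =
      ∏ i ∈ Finset.range r, (Fintype.card F ^ r - Fintype.card F ^ i) := by
    have e1 : {Z : Matrix (Fin r) (Fin r) F // IsUnit (1 + Z)} ≃
        {W : Matrix (Fin r) (Fin r) F // IsUnit W} :=
      ⟨fun Z => ⟨1 + Z.1, Z.2⟩,
       fun W => ⟨W.1 - 1, by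
          have h : (1 : Matrix (Fin r) (Fin r) F) + (W.1 - 1) = W.1 := by abel
          rw [h]; exact W.2⟩,
       fun Z => Subtype.ext (by simp), fun W => Subtype.ext (by simp)⟩
    have e2 : {W : Matrix (Fin r) (Fin r) F // IsUnit W} ≃ (Matrix (Fin r) (Fin r) F)ˣ :=
      ⟨fun W => W.2.unit, fun u => ⟨u, u.isUnit⟩, fun W => Subtype.ext W.2.unit_spec,
        fun u => Units.ext (IsUnit.unit_spec _)⟩
    have hGL : Nat.card (Matrix (Fin r) (Fin r) F)ˣ =
        ∏ i : Fin r, (Fintype.card F ^ r - Fintype.card F ^ (i : ℕ)) := Matrix.card_GL_field r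
    rw [Nat.card_congr (e1.trans e2), hGL,
      Fin.prod_univ_eq_prod_range (fun i => Fintype.card F ^ r - Fintype.card F ^ i) r]
  -- cardinality of matrix spaces
  have cardMat : ∀ a bb : ℕ, Fintype.card (Matrix (Fin a) (Fin bb) F) = Fintype.card F ^ (a * bb) := by
    intro a bb
    calc Fintype.card (Matrix (Fin a) (Fin bb) F)
        = Fintype.card (Fin a → Fin bb → F) := Fintype.card_congr Matrix.of.symm
      _ = (Fintype.card F ^ bb) ^ a := by
          rw [Fintype.card_fun, Fintype.card_fun, Fintype.card_fin, Fintype.card_fin]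
      _ = Fintype.card F ^ (a * bb) := by rw [← pow_mul, Nat.mul_comm bb a]
  have hc2' : Fintype.card F ^ (k * ℓ) = c * Fintype.card F ^ (r * r) := by
    rw [← cardMat k ℓ, ← cardMat r r]
    exact hc2
  -- rational arithmetic
  have hcard2 : (2 : ℕ) ≤ Fintype.card F := Fintype.one_lt_card
  have hq2 : (2:ℚ) ≤ q := by rw [hq]; exact_mod_cast hcard2
  have hq0 : (0:ℚ) < q := by linarith
  have hGQ : ((∏ i ∈ Finset.range r, (Fintype.card F ^ r - Fintype.card F ^ i) : ℕ) : ℚ) =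
      q ^ (r * r) * ∏ i ∈ Finset.range r, (1 - (1/q) ^ (i + 1)) := by
    rw [Nat.cast_prod]
    have hcast : ∀ i ∈ Finset.range r,
        ((Fintype.card F ^ r - Fintype.card F ^ i : ℕ) : ℚ) = q ^ r - q ^ i := by
      intro i hi
      have hle : Fintype.card F ^ i ≤ Fintype.card F ^ r :=
        Nat.pow_le_pow_right (by omega) (le_of_lt (Finset.mem_range.mp hi))
      rw [Nat.cast_sub hle, hq]
      push_cast
      ring
    rw [Finset.prod_congr rfl hcast, ← Finset.prod_range_reflect (fun i => 1 - (1/q) ^ (i + 1)) r]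
    have hqr : (q:ℚ) ^ (r * r) = ∏ _i ∈ Finset.range r, q ^ r := by
      rw [Finset.prod_const, Finset.card_range, ← pow_mul]
    rw [hqr, ← Finset.prod_mul_distrib]
    refine Finset.prod_congr rfl ?_
    intro i hi
    have hi' := Finset.mem_range.mp hi
    have h3 : r - 1 - i + 1 = r - i := by omega
    rw [h3]
    have hqne : (q:ℚ) ^ (r - i) ≠ 0 := by positivity
    have h5 : (q:ℚ) ^ r * (1/q) ^ (r - i) = q ^ i := by
      have h4 : (q:ℚ) ^ i * q ^ (r - i) = q ^ r := by
        rw [← pow_add]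
        congr 1
        omega
      rw [one_div, inv_pow, ← h4, mul_assoc, mul_inv_cancel₀ hqne, mul_one]
    rw [mul_sub, mul_one, h5]
  have hfinal : ∀ ε : ℚ, 1 - ε ≤ (∏ i ∈ Finset.range r, (1 - (1/q) ^ (i + 1))) →
      (1 - ε) * q ^ (k * ℓ) ≤
        (Nat.card {U : Matrix (Fin k) (Fin ℓ) F // IsUnit (A + V * U * R)} : ℚ) := by
    intro ε hε
    have hN : (Nat.card {U : Matrix (Fin k) (Fin ℓ) F // IsUnit (A + V * U * R)} : ℚ)
        = c * (q ^ (r * r) * ∏ i ∈ Finset.range r, (1 - (1/q) ^ (i + 1))) := by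
      rw [hNcard, hZcard, Nat.cast_mul, hGQ]
    have hM : q ^ (k * ℓ) = (c:ℚ) * q ^ (r * r) := by
      have h6 := congrArg (Nat.cast : ℕ → ℚ) hc2'
      push_cast at h6
      rw [hq]
      exact_mod_cast h6
    have hprodnn : 0 ≤ ∏ i ∈ Finset.range r, (1 - (1/q) ^ (i + 1)) := by
      apply Finset.prod_nonneg
      intro i hi
      have h7 : (1/q:ℚ) ^ (i + 1) ≤ 1 :=
        pow_le_one₀ (by positivity) (by rw [div_le_one hq0]; linarith)
      linarith
    calc (1 - ε) * q ^ (k * ℓ) = (c:ℚ) * ((1 - ε) * q ^ (r * r)) := by rw [hM]; ring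
    _ ≤ (c:ℚ) * (q ^ (r * r) * ∏ i ∈ Finset.range r, (1 - (1/q) ^ (i + 1))) := by
        apply mul_le_mul_of_nonneg_left _ (by positivity : (0:ℚ) ≤ (c:ℚ))
        calc (1 - ε) * q ^ (r * r)
            ≤ (∏ i ∈ Finset.range r, (1 - (1/q) ^ (i + 1))) * q ^ (r * r) :=
              mul_le_mul_of_nonneg_right hε (by positivity)
          _ = q ^ (r * r) * ∏ i ∈ Finset.range r, (1 - (1/q) ^ (i + 1)) := mul_comm _ _
    _ = _ := hN.symm
  constructor
  · intro hk1
    exact hfinal (1/q) (aux_prod_lb_one q hq2 r (by omega))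
  · intro hk2
    exact hfinal ((q+1)/q^2) (aux_prod_lb q hq2 r)
end

section
/- Let F be a finite field with q elements, let n and k be positive integers, let A ∈ M_n(F) be invertible, and let V ∈ F^(n×k). Then the number of matrices U ∈ F^(k×n) such that A + V·U is invertible is at least (1 − q^(−1)) · q^(kn) if k = 1, and at least (1 − (q+1)/q²) · q^(kn) if k ≥ 2. -/
open Matrix Finset

section aux

variable {F : Type*} [Field F]

private noncomputable def unitsEquivSubtypeIsUnit {α : Type*} [Monoid α] : {x : α // IsUnit x} ≃ αˣ where
  toFun x := x.2.unit
  invFun u := ⟨u, u.isUnit⟩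
  left_inv x := Subtype.ext x.2.unit_spec
  right_inv u := Units.ext u.isUnit.unit_spec

private lemma card_comp_surjective {M N : Type*} [AddCommGroup M] [Module F M]
    [AddCommGroup N] [Module F N]
    (f : M →ₗ[F] N) (hf : Function.Surjective f) (P : N → Prop) :
    Nat.card {x : M // P (f x)} * Nat.card N = Nat.card M * Nat.card {y : N // P y} := by
  obtain ⟨g, hg⟩ := f.exists_rightInverse_of_surjective (LinearMap.range_eq_top.2 hf)
  have hfg : ∀ y, f (g y) = y := fun y => by
    have := LinearMap.ext_iff.mp hg y; simpa using this
  have hker : ∀ (z : LinearMap.ker f) (y : N), f ((z : M) + g y) = y := by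
    intro z y
    rw [map_add, hfg, LinearMap.mem_ker.mp z.2, zero_add]
  have E : ∀ P : N → Prop, {x : M // P (f x)} ≃ (LinearMap.ker f) × {y : N // P y} := fun P =>
    { toFun := fun x => (⟨x.1 - g (f x.1), by
        rw [LinearMap.mem_ker, map_sub, hfg, sub_self]⟩, ⟨f x.1, x.2⟩)
      invFun := fun p => ⟨(p.1 : M) + g p.2.1, by rw [hker]; exact p.2.2⟩
      left_inv := fun x => Subtype.ext (by simp)
      right_inv := fun p => by
        obtain ⟨z, y⟩ := p
        refine Prod.ext (Subtype.ext ?_) (Subtype.ext ?_) <;> simp [hker z y.1] }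
  have h1 := Nat.card_congr (E P)
  have h2 := Nat.card_congr (E fun _ => True)
  have h3 : Nat.card {x : M // True} = Nat.card M :=
    Nat.card_congr (Equiv.subtypeUnivEquiv fun _ => trivial)
  have h4 : Nat.card {y : N // True} = Nat.card N :=
    Nat.card_congr (Equiv.subtypeUnivEquiv fun _ => trivial)
  rw [Nat.card_prod] at h1 h2
  rw [h3, h4] at h2
  rw [h1, h2]; ring

private lemma vecMul_of_linearMap {a b : ℕ} (f : (Fin a → F) →ₗ[F] (Fin b → F)) (u : Fin a → F) :
    u ᵥ* (Matrix.of fun i j => f (Pi.single i 1) j) = f u := by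
  funext j
  rw [congrFun (LinearMap.pi_apply_eq_sum_univ f u) j]
  simp only [Matrix.vecMul, dotProduct, Finset.sum_apply, Matrix.of_apply,
    Pi.smul_apply, smul_eq_mul]
  refine Finset.sum_congr rfl fun x _ => ?_
  refine congrArg (u x * ·) (congrFun (congrArg f ?_) j)
  funext l
  simp [Pi.single_apply, eq_comm]

private lemma row_of_mul {a b c : ℕ} (M : Matrix (Fin a) (Fin b) F)
    (N : Matrix (Fin b) (Fin c) F) (i : Fin a) : (M * N) i = (M i) ᵥ* N := by
  funext j
  simp [Matrix.mul_apply, Matrix.vecMul, dotProduct]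

private lemma card_mat (a b : ℕ) [Fintype F] :
    Nat.card (Matrix (Fin a) (Fin b) F) = Fintype.card F ^ (a * b) := by
  rw [Nat.card_eq_fintype_card]
  show Fintype.card (Fin a → Fin b → F) = _
  rw [Fintype.card_fun, Fintype.card_fun, ← pow_mul, Fintype.card_fin, Fintype.card_fin,
    Nat.mul_comm]

private lemma prod_one_sub_ge {m : ℕ} (a : ℕ → ℚ) (h0 : ∀ j, 0 ≤ a j) (h1 : ∀ j, a j ≤ 1) :
    1 - ∑ j ∈ range m, a j ≤ ∏ j ∈ range m, (1 - a j) := by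
  induction m with
  | zero => simp
  | succ m ih =>
    rw [Finset.prod_range_succ, Finset.sum_range_succ]
    have hS : 0 ≤ ∑ j ∈ range m, a j := Finset.sum_nonneg fun j _ => h0 j
    nlinarith [mul_le_mul_of_nonneg_right ih (by linarith [h1 m] : (0:ℚ) ≤ 1 - a m), h0 m]

private lemma my_geom_le {x : ℚ} (h0 : 0 ≤ x) (h1 : x < 1) (m : ℕ) :
    ∑ j ∈ range m, x ^ j ≤ 1 / (1 - x) := by
  have h1x : 0 < 1 - x := by linarith
  induction m with
  | zero =>
    rw [Finset.sum_range_zero]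
    exact le_of_lt (div_pos one_pos h1x)
  | succ m ih =>
    rw [geom_sum_succ]
    have h2 := mul_le_mul_of_nonneg_left ih h0
    have h3 : x * (1 / (1 - x)) + 1 = 1 / (1 - x) := by field_simp; ring
    linarith

private lemma prod_x_ge {x : ℚ} (h0 : 0 < x) (h1 : x ≤ 1/2) (r : ℕ) :
    1 - x - x ^ 2 ≤ ∏ j ∈ range r, (1 - x ^ (j + 1)) := by
  have hx1 : x < 1 := by linarith
  have h1x : 0 < 1 - x := by linarith
  cases r with
  | zero =>
    simp only [Finset.prod_range_zero]
    nlinarith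
  | succ m =>
    rw [Finset.prod_range_succ', zero_add, pow_one]
    have hA : 1 - ∑ j ∈ range m, x ^ (j + 2) ≤ ∏ j ∈ range m, (1 - x ^ (j + 2)) :=
      prod_one_sub_ge (fun j => x ^ (j + 2)) (fun j => by positivity)
        (fun j => pow_le_one₀ (le_of_lt h0) (by linarith))
    have hsum : ∑ j ∈ range m, x ^ (j + 2) = x ^ 2 * ∑ j ∈ range m, x ^ j := by
      rw [Finset.mul_sum]; exact Finset.sum_congr rfl fun j _ => by ring
    have hg := mul_le_mul_of_nonneg_left (my_geom_le (le_of_lt h0) hx1 m)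
      (by positivity : (0:ℚ) ≤ x ^ 2)
    have hB : 1 - x ^ 2 * (1 / (1 - x)) ≤ ∏ j ∈ range m, (1 - x ^ (j + 2)) := by
      rw [hsum] at hA; linarith
    have hfin : (1 - x) * (1 - x ^ 2 * (1 / (1 - x))) = 1 - x - x ^ 2 := by
      field_simp
    calc 1 - x - x ^ 2 = (1 - x) * (1 - x ^ 2 * (1 / (1 - x))) := hfin.symm
      _ ≤ (1 - x) * ∏ j ∈ range m, (1 - x ^ (j + 2)) :=
          mul_le_mul_of_nonneg_left hB (le_of_lt h1x)
      _ = (∏ j ∈ range m, (1 - x ^ (j + 1 + 1))) * (1 - x) := mul_comm _ _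

private lemma prod_factor (q : ℚ) (hq0 : 0 < q) (r : ℕ) :
    ∏ i ∈ range r, (q ^ r - q ^ i) = q ^ (r * r) * ∏ j ∈ range r, (1 - (1/q) ^ (j + 1)) := by
  have h1 : ∀ i ∈ range r, q ^ r - q ^ i = q ^ r * (1 - (1/q) ^ (r - i)) := by
    intro i hi
    have hi' : i ≤ r := le_of_lt (mem_range.mp hi)
    have hpow : q ^ i * q ^ (r - i) = q ^ r := by rw [← pow_add]; congr 1; omega
    have hq' : q ^ (r - i) ≠ 0 := by positivity
    have h2 : q ^ r * (1/q) ^ (r - i) = q ^ i := by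
      rw [div_pow, one_pow, ← hpow]; field_simp
    rw [mul_sub, mul_one, h2]
  rw [Finset.prod_congr rfl h1, Finset.prod_mul_distrib, Finset.prod_const, card_range,
    ← pow_mul]
  congr 1
  rw [← Finset.prod_range_reflect (fun j => 1 - (1/q) ^ (j + 1)) r]
  apply Finset.prod_congr rfl
  intro i hi
  have : r - 1 - i + 1 = r - i := by have := mem_range.mp hi; omega
  rw [this]

private lemma gl_prod_ge (q : ℚ) (hq : 2 ≤ q) (r : ℕ) :
    (1 - 1/q - 1/q^2) * q ^ (r * r) ≤ ∏ i ∈ range r, (q ^ r - q ^ i) := by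
  have hq0 : 0 < q := by linarith
  have hx0 : 0 < 1/q := by positivity
  have hx1 : 1/q ≤ 1/2 := by
    rw [div_le_div_iff₀ hq0 (by norm_num)]; linarith
  have h := prod_x_ge hx0 hx1 r
  have hsq : (1/q) ^ 2 = 1/q^2 := by rw [div_pow, one_pow]
  rw [prod_factor q hq0 r]
  calc (1 - 1/q - 1/q^2) * q ^ (r*r) = q ^ (r*r) * (1 - 1/q - (1/q)^2) := by rw [hsq]; ring
    _ ≤ q ^ (r*r) * ∏ j ∈ range r, (1 - (1/q) ^ (j+1)) :=
        mul_le_mul_of_nonneg_left h (by positivity)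

private lemma gl_prod_ge1 (q : ℚ) (hq : 2 ≤ q) {r : ℕ} (hr : r ≤ 1) :
    (1 - 1/q) * q ^ (r * r) ≤ ∏ i ∈ range r, (q ^ r - q ^ i) := by
  have hq0 : 0 < q := by linarith
  interval_cases r
  · simp
    positivity
  · simp only [Nat.mul_one, pow_one, Finset.prod_range_one, pow_zero]
    have : (1 - 1/q) * q = q - 1 := by field_simp
    rw [this]

end aux

/-- for invertible `A` and fixed `V ∈ F^(n×k)`, the number of matrices
`U ∈ F^(k×n)` with `A + V·U` invertible is at least `(1 - q⁻¹) q^(kn)` if `k = 1`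
and at least `(1 - (q+1)/q²) q^(kn)` if `k ≥ 2`. -/
theorem additive_preconditioner_nonsingular_count
    {F : Type*} [Field F] [Fintype F] (n k : ℕ) (hn : 0 < n) (hk : 0 < k)
    (q : ℚ) (hq : q = (Fintype.card F : ℚ))
    (A : Matrix (Fin n) (Fin n) F) (hA : IsUnit A)
    (V : Matrix (Fin n) (Fin k) F) :
    (k = 1 → (1 - 1 / q) * q ^ (k * n) ≤
      (Nat.card {U : Matrix (Fin k) (Fin n) F // IsUnit (A + V * U)} : ℚ)) ∧
    (2 ≤ k → (1 - (q + 1) / q ^ 2) * q ^ (k * n) ≤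
      (Nat.card {U : Matrix (Fin k) (Fin n) F // IsUnit (A + V * U)} : ℚ)) := by
  classical
  have hcard2 : 2 ≤ Fintype.card F := Fintype.one_lt_card
  have hq2 : (2:ℚ) ≤ q := by rw [hq]; exact_mod_cast hcard2
  have hq0 : (0:ℚ) < q := by linarith
  set qn : ℕ := Fintype.card F with hqn
  -- Reduce IsUnit (A + V*U) to det (1 + U*B) ≠ 0, B = A⁻¹V
  have hAdet : IsUnit A.det := (Matrix.isUnit_iff_isUnit_det A).mp hA
  set B : Matrix (Fin n) (Fin k) F := A⁻¹ * V with hB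
  have key : ∀ U : Matrix (Fin k) (Fin n) F,
      IsUnit (A + V * U) ↔ ((1 : Matrix (Fin k) (Fin k) F) + U * B).det ≠ 0 := by
    intro U
    have h1 : A + V * U = A * (1 + B * U) := by
      rw [Matrix.mul_add, Matrix.mul_one, hB, ← Matrix.mul_assoc, ← Matrix.mul_assoc,
        Matrix.mul_nonsing_inv A hAdet, Matrix.one_mul]
    rw [Matrix.isUnit_iff_isUnit_det, h1, Matrix.det_mul, Matrix.det_one_add_mul_comm,
      isUnit_iff_ne_zero, mul_ne_zero_iff]
    have : A.det ≠ 0 := hAdet.ne_zero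
    tauto
  -- linear algebra setup
  set T : (Fin n → F) →ₗ[F] (Fin k → F) := B.vecMulLinear with hT
  set r : ℕ := Module.finrank F (LinearMap.range T) with hr
  have hrk : r ≤ k := by
    have h := Submodule.finrank_le (LinearMap.range T)
    rwa [Module.finrank_fintype_fun_eq_card, Fintype.card_fin] at h
  set b := Module.finBasis F (LinearMap.range T) with hb
  set e := b.equivFun with he
  set T' : (Fin n → F) →ₗ[F] (Fin r → F) := e.toLinearMap ∘ₗ T.rangeRestrict with hT'
  have hT'surj : Function.Surjective T' := by
    exact e.surjective.comp T.surjective_rangeRestrict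
  set ι : (Fin r → F) →ₗ[F] (Fin k → F) :=
    (LinearMap.range T).subtype ∘ₗ e.symm.toLinearMap with hι
  have hιinj : Function.Injective ι :=
    (Submodule.injective_subtype _).comp e.symm.injective
  have hcomp : ∀ u, ι (T' u) = T u := by
    intro u; simp [hι, hT']
  set G : Matrix (Fin r) (Fin k) F := Matrix.of fun i j => ι (Pi.single i 1) j with hG
  set B' : Matrix (Fin n) (Fin r) F := Matrix.of fun i j => T' (Pi.single i 1) j with hB'
  have hGv : ∀ v, v ᵥ* G = ι v := fun v => vecMul_of_linearMap ι v
  have hB'v : ∀ u, u ᵥ* B' = T' u := fun u => vecMul_of_linearMap T' u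
  have hBv : ∀ u, u ᵥ* B = T u := fun u => rfl
  have hBfact : ∀ U : Matrix (Fin k) (Fin n) F, U * B = (U * B') * G := by
    intro U
    funext i
    rw [row_of_mul, row_of_mul, row_of_mul, hBv, hB'v, hGv, hcomp]
  -- surjectivity of N ↦ G * N
  have hGvec : Function.Injective G.vecMulLinear := by
    have : ⇑G.vecMulLinear = ⇑ι := funext fun v => hGv v
    rw [← this] at hιinj; exact hιinj
  have hGrank : G.rank = r := by
    have h1 : Gᵀ.rank = r := by
      rw [Matrix.rank]
      rw [Matrix.mulVecLin_transpose]
      rw [LinearMap.finrank_range_of_inj hGvec, Module.finrank_fintype_fun_eq_card,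
        Fintype.card_fin]
    rw [← Matrix.rank_transpose, h1]
  have hGsurj : Function.Surjective G.mulVecLin := by
    rw [← LinearMap.range_eq_top]
    apply Submodule.eq_top_of_finrank_eq
    rw [show Module.finrank F (LinearMap.range G.mulVecLin) = G.rank from rfl, hGrank,
      Module.finrank_fintype_fun_eq_card, Fintype.card_fin]
  -- the two linear maps used for counting
  set f1 : Matrix (Fin k) (Fin n) F →ₗ[F] Matrix (Fin k) (Fin r) F :=
    { toFun := fun U => U * B'
      map_add' := fun U U' => Matrix.add_mul U U' B'
      map_smul' := fun c U => Matrix.smul_mul c U B' } with hf1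
  have hf1surj : Function.Surjective f1 := by
    intro W
    refine ⟨Matrix.of fun i => (hT'surj (W i)).choose, ?_⟩
    funext i
    show ((Matrix.of fun i => (hT'surj (W i)).choose) * B') i = W i
    rw [row_of_mul, hB'v]
    exact (hT'surj (W i)).choose_spec
  set f2 : Matrix (Fin k) (Fin r) F →ₗ[F] Matrix (Fin r) (Fin r) F :=
    { toFun := fun N => G * N
      map_add' := fun N N' => Matrix.mul_add G N N'
      map_smul' := fun c N => Matrix.mul_smul G c N } with hf2
  have hGsurj' : ∀ w : Fin r → F, ∃ v, G *ᵥ v = w := fun w =>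
    (hGsurj w).imp fun v hv => by simpa using hv
  have hf2surj : Function.Surjective f2 := by
    intro W
    refine ⟨Matrix.of fun l j => (hGsurj' (fun i => W i j)).choose l, ?_⟩
    funext i j
    show (G * (Matrix.of fun l j => (hGsurj' (fun i => W i j)).choose l)) i j = W i j
    have hspec := (hGsurj' (fun i => W i j)).choose_spec
    calc (G * (Matrix.of fun l j => (hGsurj' (fun i => W i j)).choose l)) i j
        = (G *ᵥ (hGsurj' (fun i => W i j)).choose) i := by
          simp [Matrix.mul_apply, Matrix.mulVec, dotProduct]
      _ = W i j := by rw [hspec]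
  -- counting
  set P1 : Matrix (Fin k) (Fin r) F → Prop :=
    fun N => ((1 : Matrix (Fin k) (Fin k) F) + N * G).det ≠ 0 with hP1
  set P2 : Matrix (Fin r) (Fin r) F → Prop :=
    fun M => ((1 : Matrix (Fin r) (Fin r) F) + M).det ≠ 0 with hP2
  set C : ℕ := Nat.card {U : Matrix (Fin k) (Fin n) F // IsUnit (A + V * U)} with hC
  set C1 : ℕ := Nat.card {N : Matrix (Fin k) (Fin r) F // P1 N} with hC1
  set C2 : ℕ := Nat.card {M : Matrix (Fin r) (Fin r) F // P2 M} with hC2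
  have hCeq : C = Nat.card {U : Matrix (Fin k) (Fin n) F // P1 (f1 U)} := by
    apply Nat.card_congr
    apply Equiv.subtypeEquivRight
    intro U
    rw [key U, hP1]
    show _ ↔ ¬((1 : Matrix (Fin k) (Fin k) F) + (U * B') * G).det = 0
    rw [← hBfact U]
  have hE1 : C * qn ^ (k * r) = qn ^ (k * n) * C1 := by
    have := card_comp_surjective f1 hf1surj P1
    rwa [← hCeq, card_mat, card_mat, ← hqn] at this
  have hP1P2 : ∀ N, P1 N ↔ P2 (f2 N) := by
    intro N
    rw [hP1, hP2]
    show ¬_ = 0 ↔ ¬_ = 0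
    rw [Matrix.det_one_add_mul_comm]
    rfl
  have hE2 : C1 * qn ^ (r * r) = qn ^ (k * r) * C2 := by
    have h := card_comp_surjective f2 hf2surj P2
    have hC1' : C1 = Nat.card {N : Matrix (Fin k) (Fin r) F // P2 (f2 N)} :=
      Nat.card_congr (Equiv.subtypeEquivRight hP1P2)
    rwa [← hC1', card_mat, card_mat, ← hqn] at h
  -- C2 = |GL_r(F)|
  have hC2GL : C2 = ∏ i : Fin r, (qn ^ r - qn ^ (i : ℕ)) := by
    have e1 : {M : Matrix (Fin r) (Fin r) F // P2 M}
        ≃ {M : Matrix (Fin r) (Fin r) F // M.det ≠ 0} := by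
      refine Equiv.subtypeEquiv (Equiv.addLeft (1 : Matrix (Fin r) (Fin r) F)) ?_
      intro M; rfl
    have e2 : {M : Matrix (Fin r) (Fin r) F // M.det ≠ 0}
        ≃ {M : Matrix (Fin r) (Fin r) F // IsUnit M} := by
      apply Equiv.subtypeEquivRight
      intro M
      rw [Matrix.isUnit_iff_isUnit_det, isUnit_iff_ne_zero]
    rw [hC2, Nat.card_congr ((e1.trans e2).trans unitsEquivSubtypeIsUnit)]
    exact Matrix.card_GL_field r
  -- cast everything to ℚ
  have hqncast : ((qn : ℕ) : ℚ) = q := by rw [hq]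
  have hE1q : (C : ℚ) * q ^ (k * r) = q ^ (k * n) * C1 := by
    have := congrArg (fun x : ℕ => (x : ℚ)) hE1
    push_cast at this
    rwa [hqncast] at this
  have hE2q : (C1 : ℚ) * q ^ (r * r) = q ^ (k * r) * C2 := by
    have := congrArg (fun x : ℕ => (x : ℚ)) hE2
    push_cast at this
    rwa [hqncast] at this
  have hC2q : (C2 : ℚ) = ∏ i ∈ range r, (q ^ r - q ^ i) := by
    rw [hC2GL]
    push_cast [Nat.cast_prod]
    rw [Fin.prod_univ_eq_prod_range (fun i => ((qn ^ r - qn ^ i : ℕ) : ℚ)) r]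
    apply Finset.prod_congr rfl
    intro i hi
    have hle : qn ^ i ≤ qn ^ r :=
      Nat.pow_le_pow_right (by omega) (le_of_lt (mem_range.mp hi))
    rw [Nat.cast_sub hle]
    push_cast
    rw [hqncast]
  -- main identity: C * q^(r*r) = q^(k*n) * C2
  have hmain : (C : ℚ) * q ^ (r * r) = q ^ (k * n) * (C2 : ℚ) := by
    have hpos : (q:ℚ) ^ (k * r) ≠ 0 := by positivity
    apply mul_right_cancel₀ hpos
    calc (C:ℚ) * q^(r*r) * q^(k*r) = ((C:ℚ) * q^(k*r)) * q^(r*r) := by ring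
      _ = (q^(k*n) * C1) * q^(r*r) := by rw [hE1q]
      _ = q^(k*n) * ((C1:ℚ) * q^(r*r)) := by ring
      _ = q^(k*n) * (q^(k*r) * C2) := by rw [hE2q]
      _ = q^(k*n) * C2 * q^(k*r) := by ring
  have reduce : ∀ ε : ℚ, (1 - ε) * q ^ (r*r) ≤ (C2:ℚ) → (1 - ε) * q^(k*n) ≤ (C:ℚ) := by
    intro ε hεb
    have hpkn : (0:ℚ) < q^(k*n) := by positivity
    have hprr : (0:ℚ) < q^(r*r) := by positivity
    have h1 : (1-ε) * q^(k*n) * q^(r*r) ≤ (C:ℚ) * q^(r*r) := by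
      rw [hmain]
      calc (1-ε)*q^(k*n)*q^(r*r) = q^(k*n) * ((1-ε)*q^(r*r)) := by ring
        _ ≤ q^(k*n) * C2 := mul_le_mul_of_nonneg_left hεb (le_of_lt hpkn)
    exact le_of_mul_le_mul_right h1 hprr
  constructor
  · intro hk1
    apply reduce (1/q)
    rw [hC2q]
    exact gl_prod_ge1 q hq2 (by omega : r ≤ 1)
  · intro hk2
    apply reduce ((q+1)/q^2)
    rw [hC2q]
    have heq : 1 - (q+1)/q^2 = 1 - 1/q - 1/q^2 := by
      have hqne : q ≠ 0 := ne_of_gt hq0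
      field_simp
      ring
    rw [heq]
    exact gl_prod_ge q hq2 r
end

section
/- Let F be a finite field with q elements, let n be a positive integer, let A ∈ M_n(F), and let f ∈ F[z] be a monic irreducible polynomial of degree d that does not divide the minimal polynomial of A. Then the number of pairs (v, u) ∈ F^n × F^n such that f does not divide the minimal polynomial of A + v·uᵀ is at least (1 − q^(−d)) · q^(2n). -/
open Polynomial Matrix

set_option linter.unusedSectionVars false
section Aux
variable {n : Type*} [Fintype n] [DecidableEq n] {K : Type*} [Field K]

lemma pow_mulVec_eigen (N : Matrix n n K) (a : K) (x : n → K)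
    (hx : N *ᵥ x = a • x) : ∀ k : ℕ, (N ^ k) *ᵥ x = a ^ k • x := by
  intro k
  induction k with
  | zero => simp
  | succ k ih =>
    rw [pow_succ', ← Matrix.mulVec_mulVec, ih, Matrix.mulVec_smul, hx, smul_smul, ← pow_succ]

lemma aeval_mulVec_eigen (N : Matrix n n K) (a : K) (x : n → K)
    (hx : N *ᵥ x = a • x) (p : K[X]) :
    (aeval N p) *ᵥ x = p.eval a • x := by
  induction p using Polynomial.induction_on' with
  | add p q hp hq => simp [Matrix.add_mulVec, hp, hq, add_smul]
  | monomial k c =>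
    rw [aeval_monomial, eval_monomial]
    have : (algebraMap K (Matrix n n K)) c * N ^ k = c • N ^ k := by
      rw [Algebra.algebraMap_eq_smul_one, smul_mul_assoc, one_mul]
    rw [this, Matrix.smul_mulVec, pow_mulVec_eigen N a x hx k, smul_smul]

lemma row_mul_mul_col {ι : Type*} [Unique ι] (u w : n → K) (N : Matrix n n K) (i j : ι) :
    (replicateRow ι u * N * replicateCol ι w) i j = u ⬝ᵥ (N *ᵥ w) := by
  simp only [Matrix.mul_apply, Matrix.replicateRow_apply, Matrix.replicateCol_apply, Matrix.mulVec,
    dotProduct, Finset.sum_mul, Finset.mul_sum]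
  rw [Finset.sum_comm]
  congr 1; ext j; congr 1; ext i; ring

lemma vecMulVec_map {F : Type*} [Field F] (φ : F →+* K) (v u : n → F) :
    (vecMulVec v u).map φ = vecMulVec (φ ∘ v) (φ ∘ u) := by
  ext i j; simp [vecMulVec_apply]

end Aux

section Aux2
open AdjoinRoot
variable {F : Type*} [Field F] {n : Type*} [Fintype n] [DecidableEq n]

lemma charpoly_aeval_root (f : F[X]) [Fact (Irreducible f)]
    (B : Matrix n n F) :
    aeval (AdjoinRoot.root f) B.charpoly
      = det (scalar n (AdjoinRoot.root f) - B.map (algebraMap F (AdjoinRoot f))) := by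
  rw [aeval_def, ← eval_map, ← Matrix.charpoly_map, Matrix.charpoly, _root_.eval_det,
    matPolyEquiv_charmatrix, sub_eq_add_neg, ← map_neg, eval_add, eval_X, eval_C,
    ← sub_eq_add_neg]

lemma scalar_mulVec {K : Type*} [Field K] (a : K) (x : n → K) :
    scalar n a *ᵥ x = a • x := by
  ext i
  simp [Matrix.scalar_apply, Matrix.mulVec_diagonal]

lemma dvd_minpoly_iff_det_eq_zero (f : F[X]) [Fact (Irreducible f)]
    (B : Matrix n n F) :
    f ∣ minpoly F B ↔
      det (scalar n (AdjoinRoot.root f) - B.map (algebraMap F (AdjoinRoot f))) = 0 := by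
  set K := AdjoinRoot f
  set α : K := AdjoinRoot.root f with hα
  set φ := algebraMap F K with hφ
  have hdvd : ∀ p : F[X], f ∣ p ↔ aeval α p = 0 := by
    intro p; rw [hα, AdjoinRoot.aeval_eq]; exact AdjoinRoot.mk_eq_zero.symm
  constructor
  · intro h
    rw [← charpoly_aeval_root f B]
    exact (hdvd _).1 (h.trans (minpoly.dvd F B (Matrix.aeval_self_charpoly B)))
  · intro h
    obtain ⟨x, hxne, hx0⟩ := (Matrix.exists_mulVec_eq_zero_iff).2 h
    have hx2 : (B.map φ) *ᵥ x = α • x := by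
      rw [Matrix.sub_mulVec, sub_eq_zero, scalar_mulVec] at hx0
      exact hx0.symm
    have h3 := aeval_mulVec_eigen (B.map φ) α x hx2 ((minpoly F B).map φ)
    have h4 : aeval (B.map φ) ((minpoly F B).map φ) = 0 := by
      rw [hφ, aeval_map_algebraMap]
      have hBm : B.map φ = (AlgHom.mapMatrix (Algebra.ofId F K)) B := by
        ext i j; simp [Algebra.ofId_apply, hφ]
      rw [hBm, aeval_algHom_apply, minpoly.aeval, map_zero]
    rw [h4, Matrix.zero_mulVec] at h3
    have h5 : ((minpoly F B).map φ).eval α = 0 := by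
      rcases smul_eq_zero.mp h3.symm with h'|h'
      · exact h'
      · exact absurd h' hxne
    rw [eval_map, ← aeval_def] at h5
    exact (hdvd _).2 h5

end Aux2

section Aux3
open AdjoinRoot
variable {F : Type*} [Field F] {n : Type*} [Fintype n] [DecidableEq n]

lemma det_one_add_row_mul_col {K : Type*} [Field K] {ι : Type*} [Unique ι]
    (N : Matrix n n K) (u w : n → K) :
    (1 + replicateRow ι u * N * replicateCol ι w).det = 1 + u ⬝ᵥ (N *ᵥ w) := by
  rw [Matrix.det_unique, Matrix.add_apply, Matrix.one_apply_eq, row_mul_mul_col]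

lemma dvd_minpoly_rankone_iff (f : F[X]) [Fact (Irreducible f)] (A : Matrix n n F)
    (hnd : ¬ f ∣ minpoly F A) (v u : n → F) :
    (f ∣ minpoly F (A + vecMulVec v u)) ↔
      ((algebraMap F (AdjoinRoot f)) ∘ u) ⬝ᵥ
        ((scalar n (AdjoinRoot.root f) - A.map (algebraMap F (AdjoinRoot f)))⁻¹ *ᵥ
          ((algebraMap F (AdjoinRoot f)) ∘ v)) = 1 := by
  set K := AdjoinRoot f
  set α : K := AdjoinRoot.root f with hα
  set φ := algebraMap F K with hφ
  set M : Matrix n n K := scalar n α - A.map φ with hM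
  have hdetM : M.det ≠ 0 := fun h => hnd ((dvd_minpoly_iff_det_eq_zero f A).2 h)
  have hunit : IsUnit M.det := isUnit_iff_ne_zero.2 hdetM
  rw [dvd_minpoly_iff_det_eq_zero f]
  have hsplit : scalar n α - (A + vecMulVec v u).map φ
      = M + replicateCol (Fin 1) (-(⇑φ ∘ v)) * replicateRow (Fin 1) (⇑φ ∘ u) := by
    erw [← vecMulVec_eq (Fin 1)]
    ext i j
    simp only [hM, Matrix.sub_apply, Matrix.add_apply, Matrix.map_apply, vecMulVec_apply,
      Pi.neg_apply, Function.comp_apply, map_add, RingHom.map_mul]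
    ring
  rw [hsplit]
  erw [Matrix.det_add_replicateCol_mul_replicateRow hunit]
  rw [det_one_add_row_mul_col,
    Matrix.mulVec_neg, dotProduct_neg, mul_eq_zero]
  constructor
  · rintro (h | h)
    · exact absurd h hdetM
    · linear_combination -h
  · intro h
    right
    linear_combination -h
end Aux3

set_option maxHeartbeats 1000000


/-- if a monic irreducible `f` of degree `d` does not divide the
minimal polynomial of `A`, then the number of pairs `(v, u)` such that `f` does
not divide the minimal polynomial of `A + v·uᵀ` is at least `(1 - q^{-d}) q^{2n}`. -/
theorem rank_one_update_minpoly_not_div_count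
    {F : Type*} [Field F] [Fintype F] (n d : ℕ) (hn : 0 < n)
    (q : ℚ) (hq : q = (Fintype.card F : ℚ))
    (A : Matrix (Fin n) (Fin n) F) (f : Polynomial F)
    (hmonic : f.Monic) (hirr : Irreducible f) (hdeg : f.natDegree = d)
    (hnd : ¬ (f ∣ minpoly F A)) :
    (1 - 1 / q ^ d) * q ^ (2 * n) ≤
      (Nat.card {p : (Fin n → F) × (Fin n → F) //
        ¬ (f ∣ minpoly F (A + Matrix.vecMulVec p.1 p.2))} : ℚ) := by
  classical
  haveI : Fact (Irreducible f) := ⟨hirr⟩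
  set K := AdjoinRoot f with hK
  set α : K := AdjoinRoot.root f with hα
  set φ : F →+* K := algebraMap F K with hφ
  haveI : Module.Finite F K := (AdjoinRoot.powerBasis' hmonic).finite
  haveI : Finite K := Module.finite_of_finite F
  haveI : Fintype K := Fintype.ofFinite K
  have hq1 : 0 < Fintype.card F := Fintype.card_pos
  have hfinrank : Module.finrank F K = d := by
    rw [(AdjoinRoot.powerBasis' hmonic).finrank, AdjoinRoot.powerBasis'_dim, hdeg]
  have hcardK : Fintype.card K = Fintype.card F ^ d := by
    rw [Module.card_eq_pow_finrank (K := F) (V := K), hfinrank]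
  set M : Matrix (Fin n) (Fin n) K := scalar (Fin n) α - A.map ⇑φ with hM
  have hdetM : M.det ≠ 0 := fun h => hnd ((dvd_minpoly_iff_det_eq_zero f A).2 h)
  have hMinv : M * M⁻¹ = 1 := Matrix.mul_nonsing_inv _ (isUnit_iff_ne_zero.2 hdetM)
  set W : (Fin n → F) → (Fin n → K) := fun v => M⁻¹ *ᵥ (⇑φ ∘ v) with hW
  set L : (Fin n → F) → ((Fin n → F) →ₗ[F] K) := fun v =>
    { toFun := fun u => ∑ i, u i • W v i
      map_add' := fun a b => by
        simp [add_smul, Finset.sum_add_distrib]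
      map_smul' := fun c a => by
        simp only [Pi.smul_apply, smul_eq_mul, RingHom.id_apply, Finset.smul_sum]
        exact Finset.sum_congr rfl fun i _ => mul_smul _ _ _ } with hL
  have hLapp : ∀ v u, L v u = ∑ i, u i • W v i := fun v u => rfl
  have hkey : ∀ v u : Fin n → F,
      (f ∣ minpoly F (A + Matrix.vecMulVec v u)) ↔ L v u = 1 := by
    intro v u
    rw [dvd_minpoly_rankone_iff f A hnd v u]
    have heq : (⇑(algebraMap F (AdjoinRoot f)) ∘ u) ⬝ᵥ
        ((scalar (Fin n) (AdjoinRoot.root f) -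
          A.map ⇑(algebraMap F (AdjoinRoot f)))⁻¹ *ᵥ
          (⇑(algebraMap F (AdjoinRoot f)) ∘ v)) = L v u := by
      rw [hLapp]
      simp only [hW, hM, hφ, hα, hK, dotProduct, Function.comp_apply]
      exact Finset.sum_congr rfl fun i _ => (Algebra.smul_def _ _).symm
    rw [heq]
  -- the span argument
  have hrange : ∀ v : Fin n → F, (∃ u, L v u = 1) → LinearMap.range (L v) = ⊤ := by
    intro v hex
    rw [Submodule.eq_top_iff']
    set S := LinearMap.range (L v) with hS
    have h1S : (1 : K) ∈ S := by obtain ⟨u0, hu0⟩ := hex; exact ⟨u0, hu0⟩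
    have hwS : ∀ i, W v i ∈ S := by
      intro i
      refine ⟨Pi.single i 1, ?_⟩
      rw [hLapp]
      simp [Pi.single_apply, ite_smul]
    have hMW : M *ᵥ (W v) = ⇑φ ∘ v := by
      show M *ᵥ (M⁻¹ *ᵥ (⇑φ ∘ v)) = ⇑φ ∘ v
      rw [Matrix.mulVec_mulVec, hMinv, Matrix.one_mulVec]
    have hgen : ∀ i, α • W v i ∈ S := by
      intro i
      have hMWi := congrFun hMW i
      have hsub : (M *ᵥ W v) i = α • W v i - ∑ j, A i j • W v j := by
        rw [hM, Matrix.sub_mulVec]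
        have h1 : (scalar (Fin n) α *ᵥ W v) i = α • W v i := by
          rw [scalar_mulVec]; rfl
        have h2 : ((A.map ⇑φ) *ᵥ W v) i = ∑ j, A i j • W v j := by
          simp only [Matrix.mulVec, dotProduct, Matrix.map_apply]
          exact Finset.sum_congr rfl fun j _ => (Algebra.smul_def _ _).symm
        rw [Pi.sub_apply, h1, h2]
      rw [hsub] at hMWi
      have hval : α • W v i = (v i) • (1 : K) + ∑ j, A i j • W v j := by
        rw [← Algebra.algebraMap_eq_smul_one]
        have h' := sub_eq_iff_eq_add.mp hMWi
        simp only [Function.comp_apply, hφ] at h'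
        rw [h', add_comm]
      rw [hval]
      exact S.add_mem (S.smul_mem _ h1S) (Submodule.sum_mem _ fun j _ => S.smul_mem _ (hwS j))
    have hαS : ∀ s ∈ S, α • s ∈ S := by
      rintro s ⟨a, rfl⟩
      have : α • (L v a) = ∑ i, a i • (α • W v i) := by
        rw [hLapp, Finset.smul_sum]
        exact Finset.sum_congr rfl fun i _ => smul_comm _ _ _
      rw [this]
      exact Submodule.sum_mem _ fun i _ => S.smul_mem _ (hgen i)
    have hpow : ∀ k : ℕ, (α ^ k : K) ∈ S := by
      intro k; induction k with
      | zero => simpa using h1S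
      | succ k ih =>
        rw [pow_succ, mul_comm, ← smul_eq_mul]
        exact hαS _ ih
    intro c
    obtain ⟨p, rfl⟩ := AdjoinRoot.mk_surjective (g := f) c
    rw [← AdjoinRoot.aeval_eq, Polynomial.aeval_eq_sum_range]
    exact Submodule.sum_mem _ fun i _ => S.smul_mem _ (hpow i)
  -- counting per v
  have hcount : ∀ v : Fin n → F,
      Fintype.card {u : Fin n → F // L v u = 1} * Fintype.card K
        ≤ Fintype.card (Fin n → F) := by
    intro v
    by_cases hex : ∃ u, L v u = 1
    · obtain ⟨u0, hu0⟩ := hex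
      have hr := hrange v ⟨u0, hu0⟩
      have e : {u : Fin n → F // L v u = 1} ≃ LinearMap.ker (L v) :=
        { toFun := fun x => ⟨x.1 - u0, by
            rw [LinearMap.mem_ker, map_sub, x.2, hu0, sub_self]⟩
          invFun := fun x => ⟨x.1 + u0, by
            rw [map_add, LinearMap.mem_ker.mp x.2, hu0, zero_add]⟩
          left_inv := fun x => by
            apply Subtype.ext; simp
          right_inv := fun x => by
            apply Subtype.ext; simp }
      have h1 : Nat.card (Fin n → F)
          = Nat.card (LinearMap.ker (L v)) * Nat.card ((Fin n → F) ⧸ LinearMap.ker (L v)) :=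
        Submodule.card_eq_card_quotient_mul_card _
      have h2 : Nat.card ((Fin n → F) ⧸ LinearMap.ker (L v)) = Nat.card K := by
        refine Nat.card_congr ((LinearMap.quotKerEquivRange (L v)).toEquiv.trans ?_)
        rw [hr]
        exact Submodule.topEquiv.toEquiv
      have h3 : Fintype.card {u : Fin n → F // L v u = 1} = Nat.card (LinearMap.ker (L v)) := by
        rw [← Nat.card_eq_fintype_card]
        exact Nat.card_congr e
      refine le_of_eq ?_
      calc Fintype.card {u : Fin n → F // L v u = 1} * Fintype.card K
          = Nat.card (LinearMap.ker (L v)) * Nat.card ((Fin n → F) ⧸ LinearMap.ker (L v)) := by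
            rw [h3, ← Nat.card_eq_fintype_card, ← h2]
        _ = Nat.card (Fin n → F) := h1.symm
        _ = Fintype.card (Fin n → F) := Nat.card_eq_fintype_card
    · have hzero : Fintype.card {u : Fin n → F // L v u = 1} = 0 := by
        rw [Fintype.card_eq_zero_iff]
        exact ⟨fun x => hex ⟨x.1, x.2⟩⟩
      rw [hzero, zero_mul]
      exact Nat.zero_le _
  -- total bad count
  have hbad : Fintype.card {p : (Fin n → F) × (Fin n → F) //
        f ∣ minpoly F (A + Matrix.vecMulVec p.1 p.2)} * Fintype.card K
      ≤ Fintype.card (Fin n → F) * Fintype.card (Fin n → F) := by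
    have e1 : {p : (Fin n → F) × (Fin n → F) //
        f ∣ minpoly F (A + Matrix.vecMulVec p.1 p.2)}
        ≃ Σ v : Fin n → F, {u : Fin n → F // L v u = 1} :=
      (Equiv.subtypeProdEquivSigmaSubtype
        (fun v u => f ∣ minpoly F (A + Matrix.vecMulVec v u))).trans
        (Equiv.sigmaCongrRight fun v => Equiv.subtypeEquivRight fun u => hkey v u)
    rw [Fintype.card_congr e1, Fintype.card_sigma, Finset.sum_mul]
    calc (∑ v : Fin n → F, Fintype.card {u : Fin n → F // L v u = 1} * Fintype.card K)
        ≤ ∑ _v : Fin n → F, Fintype.card (Fin n → F) :=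
          Finset.sum_le_sum fun v _ => hcount v
      _ = Fintype.card (Fin n → F) * Fintype.card (Fin n → F) := by
          rw [Finset.sum_const, Finset.card_univ, smul_eq_mul]
  -- assemble
  have hQn : Fintype.card (Fin n → F) = Fintype.card F ^ n := by
    rw [Fintype.card_fun, Fintype.card_fin]
  have hgood : Nat.card {p : (Fin n → F) × (Fin n → F) //
        ¬ (f ∣ minpoly F (A + Matrix.vecMulVec p.1 p.2))}
      = Fintype.card F ^ (2 * n) - Fintype.card {p : (Fin n → F) × (Fin n → F) //
        f ∣ minpoly F (A + Matrix.vecMulVec p.1 p.2)} := by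
    rw [Nat.card_eq_fintype_card, Fintype.card_subtype_compl, Fintype.card_prod, hQn,
      ← pow_add, ← two_mul]
  have hb2 : Fintype.card {p : (Fin n → F) × (Fin n → F) //
        f ∣ minpoly F (A + Matrix.vecMulVec p.1 p.2)} * Fintype.card F ^ d
      ≤ Fintype.card F ^ (2 * n) := by
    rw [← hcardK]
    calc _ ≤ Fintype.card (Fin n → F) * Fintype.card (Fin n → F) := hbad
      _ = Fintype.card F ^ (2 * n) := by rw [hQn, ← pow_add, ← two_mul]
  have hble : Fintype.card {p : (Fin n → F) × (Fin n → F) //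
        f ∣ minpoly F (A + Matrix.vecMulVec p.1 p.2)} ≤ Fintype.card F ^ (2 * n) :=
    le_trans (Nat.le_mul_of_pos_right _ (pow_pos hq1 d)) hb2
  rw [hgood, Nat.cast_sub hble, Nat.cast_pow]
  have hq0 : (0 : ℚ) < q := by rw [hq]; exact_mod_cast hq1
  have hqd : (0 : ℚ) < q ^ d := pow_pos hq0 d
  have hcast : (Fintype.card {p : (Fin n → F) × (Fin n → F) //
        f ∣ minpoly F (A + Matrix.vecMulVec p.1 p.2)} : ℚ) * q ^ d ≤ q ^ (2 * n) := by
    rw [hq]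
    exact_mod_cast hb2
  have h5 : (Fintype.card {p : (Fin n → F) × (Fin n → F) //
        f ∣ minpoly F (A + Matrix.vecMulVec p.1 p.2)} : ℚ) ≤ q ^ (2 * n) / q ^ d :=
    (le_div_iff₀ hqd).2 hcast
  have h6 : (1 - 1 / q ^ d) * q ^ (2 * n) = q ^ (2 * n) - q ^ (2 * n) / q ^ d := by
    field_simp
  have h7 : ((Fintype.card F : ℚ)) ^ (2 * n) = q ^ (2 * n) := by rw [hq]
  rw [h7, h6]
  linarith
end

section
/- Let F be a field, let n and k be positive integers, and let A, B ∈ M_n(F) with rank(B) ≤ k. If A has more than k nontrivial nilpotent blocks, i.e., rank(A) − rank(A²) ≥ k + 1, then z² divides the minimal polynomial of A + B. -/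
open Polynomial Submodule Module

/-- Rank–nullity for the restriction of an endomorphism to a submodule. -/
private lemma aux_rank_nullity {F V : Type*} [Field F] [AddCommGroup V] [Module F V]
    [FiniteDimensional F V] (f : V →ₗ[F] V) (S : Submodule F V) :
    finrank F (S.map f) + finrank F ↥(LinearMap.ker f ⊓ S) = finrank F S := by
  have h := LinearMap.finrank_range_add_finrank_ker (f.domRestrict S)
  rw [LinearMap.range_domRestrict, LinearMap.ker_domRestrict] at h
  have hc : (LinearMap.ker f).comap S.subtype = (LinearMap.ker f ⊓ S).comap S.subtype := by
    rw [Submodule.comap_inf, Submodule.comap_subtype_self, inf_top_eq]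
  have e := Submodule.comapSubtypeEquivOfLe (inf_le_right : LinearMap.ker f ⊓ S ≤ S)
  rw [hc, e.finrank_eq] at h
  exact h

/-- if `rank B ≤ k` and `A` has more than `k` nontrivial nilpotent
blocks (i.e. `rank A - rank A² ≥ k + 1`), then `z²` divides the minimal
polynomial of `A + B`. -/
theorem many_nilpotent_blocks_persist
    {F : Type*} [Field F] (n k : ℕ) (hn : 0 < n) (hk : 0 < k)
    (A B : Matrix (Fin n) (Fin n) F) (hB : B.rank ≤ k)
    (hA : k + 1 ≤ A.rank - (A * A).rank) :
    Polynomial.X ^ 2 ∣ minpoly F (A + B) := by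
  by_contra hcon
  -- Step 1: a polynomial `q` with `q(0) ≠ 0` and `(A+B) * q(A+B) = 0`.
  obtain ⟨q, hq0, hq1⟩ : ∃ q : F[X], q.coeff 0 ≠ 0 ∧
      (A + B) * (Polynomial.aeval (A + B) q) = 0 := by
    by_cases hX : (X : F[X]) ∣ minpoly F (A + B)
    · obtain ⟨q, hq⟩ := hX
      refine ⟨q, ?_, ?_⟩
      · intro h0
        obtain ⟨r, hr⟩ := Polynomial.X_dvd_iff.mpr h0
        exact hcon ⟨r, by rw [hq, hr, sq, mul_assoc]⟩
      · have h2 : Polynomial.aeval (A + B) (minpoly F (A + B)) = 0 := minpoly.aeval F (A + B)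
        rwa [hq, map_mul, Polynomial.aeval_X] at h2
    · refine ⟨minpoly F (A + B), fun h0 => hX (Polynomial.X_dvd_iff.mpr h0), ?_⟩
      rw [minpoly.aeval F (A + B), mul_zero]
  -- Step 2: pass to endomorphisms.
  let φ : Matrix (Fin n) (Fin n) F ≃ₐ[F] ((Fin n → F) →ₗ[F] (Fin n → F)) :=
    Matrix.toLinAlgEquiv'
  let f : (Fin n → F) →ₗ[F] (Fin n → F) := φ A
  let b : (Fin n → F) →ₗ[F] (Fin n → F) := φ B
  let c : (Fin n → F) →ₗ[F] (Fin n → F) := φ (A + B)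
  have hcfb : c = f + b := map_add φ A B
  -- The `A`-invariant subspace generated by the range of `B`.
  let N : Submodule F (Fin n → F) := ⨆ j : ℕ, LinearMap.range ((f ^ j) * b)
  have hNb : LinearMap.range b ≤ N := by
    have h0 : LinearMap.range ((f ^ 0) * b) ≤ N := le_iSup (fun j : ℕ => LinearMap.range ((f ^ j) * b)) 0
    rwa [pow_zero, one_mul] at h0
  have hmapj : ∀ j : ℕ, Submodule.map f (LinearMap.range ((f ^ j) * b)) =
      LinearMap.range ((f ^ (j + 1)) * b) := by
    intro j
    rw [← LinearMap.range_comp, ← Module.End.mul_eq_comp, ← mul_assoc, ← pow_succ']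
  have hNf : Submodule.map f N ≤ N := by
    rw [Submodule.map_iSup]
    refine iSup_le fun j => ?_
    rw [hmapj j]
    exact le_iSup (fun j : ℕ => LinearMap.range ((f ^ j) * b)) (j + 1)
  have hNfm : ∀ x ∈ N, f x ∈ N := fun x hx => hNf ⟨x, hx, rfl⟩
  have hNc : ∀ x ∈ N, c x ∈ N := by
    intro x hx
    rw [hcfb]
    exact add_mem (hNfm x hx) (hNb (LinearMap.mem_range_self b x))
  have hN3 : N ≤ LinearMap.range b ⊔ Submodule.map f N := by
    refine iSup_le fun j => ?_
    cases j with
    | zero =>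
      rw [pow_zero, one_mul]
      exact le_sup_left
    | succ j =>
      rw [← hmapj j]
      exact le_trans (Submodule.map_mono (le_iSup (fun j : ℕ => LinearMap.range ((f ^ j) * b)) j)) le_sup_right
  -- Step 3: congruence mod N between polynomials in `c` and in `f`.
  have hpow : ∀ (j : ℕ) (v : Fin n → F), (c ^ j) v - (f ^ j) v ∈ N := by
    intro j
    induction j with
    | zero => simp
    | succ j ih =>
      intro v
      have h1 : (c ^ (j + 1)) v = c ((c ^ j) v) := by rw [pow_succ']; rfl
      have h2 : (f ^ (j + 1)) v = f ((f ^ j) v) := by rw [pow_succ']; rfl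
      have key : c ((c ^ j) v) - f ((f ^ j) v)
          = c ((c ^ j) v - (f ^ j) v) + b ((f ^ j) v) := by
        rw [hcfb]
        simp only [LinearMap.add_apply, map_sub]
        abel
      rw [h1, h2, key]
      exact add_mem (hNc _ (ih v)) (hNb (LinearMap.mem_range_self b _))
  have haeval : ∀ (p : F[X]) (v : Fin n → F),
      (Polynomial.aeval c p) v - (Polynomial.aeval f p) v ∈ N := by
    intro p
    induction p using Polynomial.induction_on' with
    | add p r hp hr =>
      intro v
      have := add_mem (hp v) (hr v)
      simp only [map_add, LinearMap.add_apply] at this ⊢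
      convert this using 1
      abel
    | monomial j a =>
      intro v
      have heq : (Polynomial.aeval c (Polynomial.monomial j a)) v
          - (Polynomial.aeval f (Polynomial.monomial j a)) v
          = a • ((c ^ j) v - (f ^ j) v) := by
        simp only [Polynomial.aeval_monomial, Module.End.mul_apply,
          Module.algebraMap_end_apply, smul_sub]
      rw [heq]
      exact Submodule.smul_mem _ _ (hpow j v)
  -- Step 4: `f (q(f) v) ∈ N` for every `v`.
  have hq1' : ∀ v, c ((Polynomial.aeval c q) v) = 0 := by
    intro v
    have h0 : φ ((A + B) * (Polynomial.aeval (A + B) q)) = 0 := by rw [hq1, map_zero]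
    rw [map_mul] at h0
    have h2 : φ (Polynomial.aeval (A + B) q) = Polynomial.aeval c q :=
      (Polynomial.aeval_algHom_apply (φ : Matrix (Fin n) (Fin n) F →ₐ[F]
        ((Fin n → F) →ₗ[F] (Fin n → F))) (A + B) q).symm
    rw [h2] at h0
    have hz := congrArg (fun (g : (Fin n → F) →ₗ[F] (Fin n → F)) => g v) h0
    simp only [Module.End.mul_apply, LinearMap.zero_apply] at hz
    exact hz
  have hfqN : ∀ v, f ((Polynomial.aeval f q) v) ∈ N := by
    intro v
    have h := haeval (X * q) v
    have hc0 : (Polynomial.aeval c (X * q)) v = 0 := by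
      rw [map_mul, Polynomial.aeval_X, Module.End.mul_apply]
      exact hq1' v
    rw [hc0, zero_sub] at h
    have h2 := Submodule.neg_mem N (neg_mem h)
    rw [neg_neg] at h2
    have h3 := neg_mem h
    rw [neg_neg] at h3
    rwa [map_mul, Polynomial.aeval_X, Module.End.mul_apply] at h3
  -- Step 5: `f (ker (f^n)) ⊆ N` using coprimality of `q` and `X^n`.
  have hXq : ¬ (X : F[X]) ∣ q := fun h => hq0 (Polynomial.X_dvd_iff.mp h)
  have hcop : IsCoprime ((X : F[X]) ^ n) q :=
    ((Polynomial.irreducible_X.coprime_iff_not_dvd).mpr hXq).pow_left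
  obtain ⟨u, w, huw⟩ := hcop
  have huw' : u * X ^ n + q * w = 1 := by rw [mul_comm q w]; exact huw
  have hGN : Submodule.map f (LinearMap.ker (f ^ n)) ≤ N := by
    rintro _ ⟨g, hg, rfl⟩
    have hg' : (f ^ n) g = 0 := hg
    have h1 : (Polynomial.aeval f (u * X ^ n + q * w)) g = g := by
      rw [huw', map_one, Module.End.one_apply]
    rw [map_add, map_mul, map_mul, map_pow, Polynomial.aeval_X, LinearMap.add_apply,
      Module.End.mul_apply, Module.End.mul_apply, hg', map_zero, zero_add] at h1
    rw [← h1]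
    exact hfqN _
  -- Step 6: dimension counting.
  have hrank_eq : ∀ M : Matrix (Fin n) (Fin n) F,
      M.rank = finrank F (LinearMap.range (φ M)) := by
    intro M
    rfl
  have h1 := LinearMap.finrank_range_add_finrank_ker f
  have h2 := LinearMap.finrank_range_add_finrank_ker (f * f)
  have hVn : finrank F (Fin n → F) = n := Module.finrank_fin_fun F
  rw [hVn] at h1 h2
  have hAA : φ (A * A) = f * f := map_mul φ A A
  have hrA : A.rank = finrank F (LinearMap.range f) := hrank_eq A
  have hrAA : (A * A).rank = finrank F (LinearMap.range (f * f)) := by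
    rw [hrank_eq (A * A), hAA]
  have hrB : B.rank = finrank F (LinearMap.range b) := hrank_eq B
  -- kernel dimension gap
  have hkergap : finrank F (LinearMap.ker f) + (k + 1) ≤ finrank F (LinearMap.ker (f * f)) := by
    omega
  -- n ≥ 2
  have hker2n : finrank F (LinearMap.ker (f * f)) ≤ n := by
    have := Submodule.finrank_le (LinearMap.ker (f * f))
    rwa [hVn] at this
  have hn2 : 2 ≤ n := by omega
  -- kernel inclusions
  have hker1 : LinearMap.ker f ≤ LinearMap.ker (f ^ n) := by
    intro x hx
    have hfx : f x = 0 := hx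
    have hpn : f ^ n = f ^ (n - 1) * f := by
      rw [← pow_succ]
      congr 1
      omega
    show (f ^ n) x = 0
    rw [hpn, Module.End.mul_apply, hfx, map_zero]
  have hker2 : LinearMap.ker (f * f) ≤ LinearMap.ker (f ^ n) := by
    intro x hx
    have hfx : (f * f) x = 0 := hx
    have hpn : f ^ n = f ^ (n - 2) * (f * f) := by
      rw [← sq, ← pow_add]
      congr 1
      omega
    show (f ^ n) x = 0
    rw [hpn, Module.End.mul_apply, hfx, map_zero]
  set G := LinearMap.ker (f ^ n) with hG
  have e1 := aux_rank_nullity f G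
  have e2 := aux_rank_nullity (f * f) G
  have e3 := aux_rank_nullity f (Submodule.map f G)
  have hinf1 : LinearMap.ker f ⊓ G = LinearMap.ker f := inf_eq_left.mpr hker1
  have hinf2 : LinearMap.ker (f * f) ⊓ G = LinearMap.ker (f * f) := inf_eq_left.mpr hker2
  have hmapmap : Submodule.map f (Submodule.map f G) = Submodule.map (f * f) G := by
    rw [Module.End.mul_eq_comp, Submodule.map_comp]
  rw [hinf1] at e1
  rw [hinf2] at e2
  rw [hmapmap] at e3
  -- intersection with ker f inside N
  have e4 := aux_rank_nullity f N
  have e5 : finrank F N ≤ finrank F (LinearMap.range b) + finrank F (Submodule.map f N) := by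
    have hle := Submodule.finrank_mono hN3
    have heq := Submodule.finrank_sup_add_finrank_inf_eq (LinearMap.range b) (Submodule.map f N)
    omega
  have e6 : finrank F ↥(LinearMap.ker f ⊓ Submodule.map f G)
      ≤ finrank F ↥(LinearMap.ker f ⊓ N) :=
    Submodule.finrank_mono (inf_le_inf_left _ hGN)
  rw [hrA] at hA
  rw [hrAA] at hA
  rw [hrB] at hB
  omega
end

section
/- Let F be a field, let n and k be positive integers, let A, B ∈ M_n(F) with rank(B) ≤ k, and let f ∈ F[z] be a monic irreducible polynomial of degree d. If more than k of the invariant factors of A are divisible by f, i.e., n − rank(f(A)) ≥ (k + 1)·d, then f divides the minimal polynomial of A + B. -/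
open Polynomial Matrix

private lemma matrix_rank_add_le {F : Type*} [Field F] {n : ℕ}
    (A B : Matrix (Fin n) (Fin n) F) : (A + B).rank ≤ A.rank + B.rank := by
  classical
  rw [Matrix.rank, Matrix.rank, Matrix.rank, Matrix.mulVecLin_add]
  have hle : LinearMap.range (A.mulVecLin + B.mulVecLin) ≤
      LinearMap.range A.mulVecLin ⊔ LinearMap.range B.mulVecLin := by
    rintro x ⟨v, rfl⟩
    exact Submodule.mem_sup.2 ⟨A.mulVecLin v, ⟨v, rfl⟩, B.mulVecLin v, ⟨v, rfl⟩, rfl⟩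
  exact le_trans (Submodule.finrank_mono hle)
    (Submodule.finrank_add_le_finrank_add_finrank _ _)

private lemma matrix_rank_neg_le {F : Type*} [Field F] {n : ℕ}
    (A : Matrix (Fin n) (Fin n) F) : (-A).rank ≤ A.rank := by
  classical
  have : (-A) = (-1 : Matrix (Fin n) (Fin n) F) * A := by noncomm_ring
  rw [this]
  exact Matrix.rank_mul_le_right _ _

private lemma aeval_diff_rank_le {F : Type*} [Field F] {n k : ℕ}
    (A B : Matrix (Fin n) (Fin n) F) (hB : B.rank ≤ k) :
    ∀ m (p : F[X]), p.natDegree ≤ m →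
      ((Polynomial.aeval (A + B) p) - (Polynomial.aeval A p)).rank ≤ p.natDegree * k := by
  intro m
  induction m with
  | zero =>
    intro p hp
    rw [Polynomial.eq_C_of_natDegree_eq_zero (Nat.le_zero.mp hp)]
    simp
  | succ m ih =>
    intro p hp
    by_cases h0 : p.natDegree = 0
    · rw [Polynomial.eq_C_of_natDegree_eq_zero h0]
      simp
    · set q := p.divX with hq
      have hqd : q.natDegree = p.natDegree - 1 := p.natDegree_divX_eq_natDegree_tsub_one
      have hqm : q.natDegree ≤ m := by omega
      have key : (Polynomial.aeval (A + B) p) - (Polynomial.aeval A p)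
          = ((Polynomial.aeval (A + B) q) - (Polynomial.aeval A q)) * (A + B)
            + (Polynomial.aeval A q) * B := by
        conv_lhs => rw [← p.divX_mul_X_add]
        simp only [map_add, _root_.map_mul, Polynomial.aeval_X, Polynomial.aeval_C, ← hq]
        noncomm_ring
      rw [key]
      calc (((Polynomial.aeval (A + B) q) - (Polynomial.aeval A q)) * (A + B)
            + (Polynomial.aeval A q) * B).rank
          ≤ (((Polynomial.aeval (A + B) q) - (Polynomial.aeval A q)) * (A + B)).rank
            + ((Polynomial.aeval A q) * B).rank := matrix_rank_add_le _ _
        _ ≤ ((Polynomial.aeval (A + B) q) - (Polynomial.aeval A q)).rank + B.rank :=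
            add_le_add (Matrix.rank_mul_le_left _ _) (Matrix.rank_mul_le_right _ _)
        _ ≤ q.natDegree * k + k := add_le_add (ih q hqm) hB
        _ ≤ p.natDegree * k := by
            have h1 : q.natDegree + 1 = p.natDegree := by omega
            rw [← h1]; exact le_of_eq (by ring)

/-- if `rank B ≤ k` and more than `k` invariant factors of `A` are
divisible by a monic irreducible `f` of degree `d`
(i.e. `n - rank f(A) ≥ (k+1)·d`), then `f` divides the minimal polynomial of
`A + B`. -/
theorem many_invariant_factors_persist
    {F : Type*} [Field F] (n k d : ℕ) (hn : 0 < n) (hk : 0 < k)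
    (A B : Matrix (Fin n) (Fin n) F) (hB : B.rank ≤ k)
    (f : Polynomial F) (hmonic : f.Monic) (hirr : Irreducible f)
    (hdeg : f.natDegree = d)
    (hA : (k + 1) * d ≤ n - (Polynomial.aeval A f).rank) :
    f ∣ minpoly F (A + B) := by
  classical
  have hd1 : 1 ≤ d := hdeg ▸ hirr.natDegree_pos
  have hrA : (Polynomial.aeval A f).rank ≤ n := by
    simpa using (Polynomial.aeval A f).rank_le_card_width
  have hsum : (k + 1) * d + (Polynomial.aeval A f).rank ≤ n := by omega
  -- rank bound on f(A+B)
  have hdiff : ((Polynomial.aeval (A + B) f) - (Polynomial.aeval A f)).rank ≤ d * k := by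
    have := aeval_diff_rank_le A B hB f.natDegree f le_rfl
    rwa [hdeg] at this
  have hsplit : (Polynomial.aeval (A + B) f) =
      (Polynomial.aeval A f) + ((Polynomial.aeval (A + B) f) - (Polynomial.aeval A f)) := by
    abel
  have hrank : (Polynomial.aeval (A + B) f).rank < n := by
    have h1 : (Polynomial.aeval (A + B) f).rank ≤
        (Polynomial.aeval A f).rank +
          ((Polynomial.aeval (A + B) f) - (Polynomial.aeval A f)).rank := by
      conv_lhs => rw [hsplit]
      exact matrix_rank_add_le _ _
    nlinarith
  -- conclude
  by_contra hndvd
  obtain ⟨a, b, hab⟩ := hirr.coprime_iff_not_dvd.mpr hndvd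
  have h1 : (Polynomial.aeval (A + B) a) * (Polynomial.aeval (A + B) f) = 1 := by
    have := congrArg (Polynomial.aeval (A + B)) hab
    simpa [minpoly.aeval] using this
  have h2 : (Polynomial.aeval (A + B) f) * (Polynomial.aeval (A + B) a) = 1 := by
    rw [← _root_.map_mul, mul_comm, _root_.map_mul]; exact h1
  have hunit : IsUnit (Polynomial.aeval (A + B) f) :=
    ⟨⟨Polynomial.aeval (A + B) f, Polynomial.aeval (A + B) a, h2, h1⟩, rfl⟩
  have := Matrix.rank_of_isUnit _ hunit
  simp only [Fintype.card_fin] at this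
  omega
end

section
/- Let F be a finite field with q elements, let n be a positive integer, and let B ∈ M_n(F) be a matrix whose minimal polynomial is divisible by z². Then the number of vectors c ∈ F^n for which the linear system B²·x = B·c has a solution x ∈ F^n is at most q^(n−1). In particular, if c is chosen uniformly at random from F^n, then the system B²·x = B·c is consistent with probability at most 1/q. -/
open Polynomial Matrix

/-- if `z²` divides the minimal polynomial of `B`, then the number of
vectors `c` for which `B²·x = B·c` is consistent is at most `q^(n-1)`. -/
theorem consistency_count_of_minpoly_div_sq
    {F : Type*} [Field F] [Fintype F] (n q : ℕ) (hn : 0 < n)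
    (hq : q = Fintype.card F)
    (B : Matrix (Fin n) (Fin n) F)
    (h : Polynomial.X ^ 2 ∣ minpoly F B) :
    Nat.card {c : Fin n → F // ∃ x : Fin n → F, (B ^ 2).mulVec x = B.mulVec c} ≤
      q ^ (n - 1) := by
  subst hq
  set S : Submodule F (Fin n → F) :=
    (LinearMap.range (B ^ 2).mulVecLin).comap B.mulVecLin with hS
  have hcard : Nat.card {c : Fin n → F // ∃ x : Fin n → F,
      (B ^ 2).mulVec x = B.mulVec c} = Nat.card S := by
    apply Nat.card_congr
    apply Equiv.subtypeEquivRight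
    intro c
    simp [hS, LinearMap.mem_range, Matrix.mulVecLin_apply]
  rw [hcard]
  obtain ⟨g, hg⟩ := h
  have hB : IsIntegral F B := Algebra.IsIntegral.isIntegral B
  have hg0 : g ≠ 0 := by
    intro h0
    exact minpoly.ne_zero hB (by simp [hg, h0])
  have hne : S ≠ ⊤ := by
    intro htop
    -- every `B v` is in the range of `B²`
    have hmem : ∀ v : Fin n → F, ∃ x, (B ^ 2).mulVec x = B.mulVec v := by
      intro v
      have hv : v ∈ S := htop ▸ Submodule.mem_top
      obtain ⟨x, hx⟩ := hv
      exact ⟨x, hx⟩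
    -- then `X * g` annihilates `B`
    have hcomm : Polynomial.aeval B g * B = B * Polynomial.aeval B g := by
      have := congrArg (Polynomial.aeval B) (mul_comm g Polynomial.X)
      simpa [Polynomial.aeval_mul] using this
    have hann : Polynomial.aeval B (Polynomial.X * g) = 0 := by
      have hzero : ∀ v : Fin n → F,
          (Polynomial.aeval B (Polynomial.X * g)).mulVec v = 0 := by
        intro v
        obtain ⟨x, hx⟩ := hmem v
        have h1 : (Polynomial.aeval B (Polynomial.X * g)).mulVec v
            = (Polynomial.aeval B g).mulVec (B.mulVec v) := by
          rw [Polynomial.aeval_mul, Polynomial.aeval_X, hcomm.symm, ← Matrix.mulVec_mulVec]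
        rw [h1, ← hx, Matrix.mulVec_mulVec]
        have h2 : Polynomial.aeval B g * B ^ 2 = 0 := by
          have h3 : Polynomial.aeval B g * B ^ 2
              = Polynomial.aeval B (g * Polynomial.X ^ 2) := by
            simp [Polynomial.aeval_mul]
          rw [h3, mul_comm g, ← hg, minpoly.aeval]
        rw [h2, Matrix.zero_mulVec]
      apply Matrix.toLin'.injective
      apply LinearMap.ext
      intro v
      simpa [Matrix.toLin'_apply] using hzero v
    have hdvd : minpoly F B ∣ Polynomial.X * g := minpoly.dvd F B hann
    rw [hg] at hdvd
    have hdvd' : (Polynomial.X : F[X]) ^ 2 ∣ Polynomial.X :=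
      (mul_dvd_mul_iff_right hg0).mp hdvd
    have := Polynomial.natDegree_le_of_dvd hdvd' Polynomial.X_ne_zero
    simp [Polynomial.natDegree_X_pow] at this
  -- counting
  have : FiniteDimensional F (Fin n → F) := inferInstance
  have hlt : Module.finrank F S < n := by
    have := Submodule.finrank_lt (K := F) (V := Fin n → F) hne
    simpa using this
  have hle : Module.finrank F S ≤ n - 1 := Nat.le_sub_one_of_lt hlt
  haveI : Fintype S := Fintype.ofFinite _
  have hcardS : Nat.card S = Fintype.card F ^ Module.finrank F S := by
    rw [Nat.card_eq_fintype_card]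
    exact Module.card_eq_pow_finrank
  rw [hcardS]
  exact Nat.pow_le_pow_right Fintype.card_pos hle
end
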